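/- arXiv:1706.07141 — 2 statements merged into one kernel-verified Lean document; each statement's English description precedes it below -/
import Mathlib

section
/- If U₀ ≤_S U₁ in the seed order, then sp(U₀) ≤ sp(U₁); that is, the space of U₀ (the least finite set of ordinals a with [id]_{U₀} ∈ j_{U₀}([a])) is at most that of U₁. -/
noncomputable section
universe u
open FirstOrder

/-- The language of set theory: a single binary relation (we reuse `Language.graph`,
which consists of exactly one binary relation symbol, interpreted as membership). -/
abbrev setLang : FirstOrder.Language := FirstOrder.Language.graph

/-- Any class of ZF sets is a structure for the language of set theory,
interpreting the binary relation as membership. -/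
instance zfMemStructure (M : Set ZFSet) : setLang.Structure M where
  funMap := fun f _ => f.elim
  RelMap := fun r v =>
    match r with
    | .adj => (v 0 : ZFSet) ∈ (v 1 : ZFSet)

/-- The universe `V` of all ZF sets, as a class. -/
def Vclass : Set ZFSet := Set.univ

/-- A class is transitive. -/
def ZTrans (M : Set ZFSet) : Prop := ∀ x ∈ M, ∀ y : ZFSet, y ∈ x → y ∈ M

/-- An inner model: a transitive class containing all the ordinals.
(All embeddings below are fully elementary, so such an `M` that is the target of an
elementary embedding of `V` automatically satisfies ZF.) -/
def IsInnerModel (M : Set ZFSet) : Prop := ZTrans M ∧ ∀ x : ZFSet, x.IsOrdinal → x ∈ M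

/-- Elementary embeddings between classes of sets (in the language of set theory). -/
abbrev Emb (V' M : Set ZFSet) := setLang.ElementaryEmbedding V' M

/-- The value of an embedding of `V` at a set. -/
def jv0 {M : Set ZFSet} (j : Emb Vclass M) (x : ZFSet) : ZFSet :=
  (j ⟨x, Set.mem_univ x⟩ : ZFSet)

/-- The pointwise image `j[a] = {j(x) : x ∈ a}` of a set under an embedding, as a set. -/
def jImage {M : Set ZFSet} (j : Emb Vclass M) (a : ZFSet) : ZFSet :=
  @ZFSet.image (jv0 j) (Classical.allZFSetDefinable _) a

/-- ZF function application: `zApp f x` is `⋃ {y : ⟨x,y⟩ ∈ f}`,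
i.e. the value `f(x)` when `f` is a function and `x` is in its domain. -/
def zApp (f x : ZFSet) : ZFSet :=
  ZFSet.sUnion (ZFSet.sep (fun y => ZFSet.pair x y ∈ f) (ZFSet.sUnion (ZFSet.sUnion f)))

/-- `f` is a function (a functional set of ordered pairs). -/
def zIsFun (f : ZFSet) : Prop :=
  (∀ p ∈ f, ∃ x y : ZFSet, p = ZFSet.pair x y) ∧
    ∀ x y y' : ZFSet, ZFSet.pair x y ∈ f → ZFSet.pair x y' ∈ f → y = y'

/-- `f` is a function with domain `d`. -/
def zFnOn (f d : ZFSet) : Prop :=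
  zIsFun f ∧ ∀ x : ZFSet, (∃ y, ZFSet.pair x y ∈ f) ↔ x ∈ d

/-- `U` is a countably complete ultrafilter over the set `A`. -/
structure IsCCUF (U A : ZFSet) : Prop where
  mem_sub : ∀ X ∈ U, X ⊆ A
  top_mem : A ∈ U
  empty_not_mem : (∅ : ZFSet) ∉ U
  superset : ∀ X Y : ZFSet, X ∈ U → X ⊆ Y → Y ⊆ A → Y ∈ U
  inter_mem : ∀ X Y : ZFSet, X ∈ U → Y ∈ U → X ∩ Y ∈ U
  ultra : ∀ X : ZFSet, X ⊆ A → X ∈ U ∨ A \ X ∈ U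
  countably_complete : ∀ f : ℕ → ZFSet, (∀ n, f n ∈ U) → ∃ x, ∀ n, x ∈ f n

/-- `U` is a principal ultrafilter over `A`. -/
def zPrincipal (U A : ZFSet) : Prop :=
  ∃ a ∈ A, U = ZFSet.sep (fun X => a ∈ X) (ZFSet.powerset A)

/-- The ultrapower of the (possibly class-sized) model `V'` by the ultrafilter `U` on `A ∈ V'`:
a transitive inner model `M`, an elementary embedding `j : V' → M`, and a seed `[id]_U ∈ M`
such that `U` is the ultrafilter on `A` derived from `j` using the seed, and every element
of `M` has the form `j(f)(seed)` (Łoś). -/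
structure UltrapowerIn (V' : Set ZFSet) (U A : ZFSet) where
  M : Set ZFSet
  inner : IsInnerModel M
  sub : M ⊆ V'
  j : Emb V' M
  seed : ZFSet
  seed_mem : seed ∈ M
  derived : ∀ (X : ZFSet) (hX : X ∈ V'), X ⊆ A → (X ∈ U ↔ seed ∈ (j ⟨X, hX⟩ : ZFSet))
  los : ∀ y ∈ M, ∃ (f : ZFSet) (hf : f ∈ V'), y = zApp (j ⟨f, hf⟩ : ZFSet) seed

/-- The Ultrapower Axiom: every pair of countably complete ultrafilters admits a comparison
by internal ultrafilters: there are countably complete ultrafilters `W₀ ∈ Ult(V,U₀)` and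
`W₁ ∈ Ult(V,U₁)` whose respective internal ultrapowers agree and whose ultrapower embeddings
commute with those of `U₀` and `U₁`. -/
def UltrapowerAxiom : Prop :=
  ∀ (U₀ A₀ U₁ A₁ : ZFSet.{u}), IsCCUF U₀ A₀ → IsCCUF U₁ A₁ →
    ∀ (P₀ : UltrapowerIn Vclass U₀ A₀) (P₁ : UltrapowerIn Vclass U₁ A₁),
      ∃ (W₀ B₀ W₁ B₁ : ZFSet), W₀ ∈ P₀.M ∧ W₁ ∈ P₁.M ∧ IsCCUF W₀ B₀ ∧ IsCCUF W₁ B₁ ∧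
        ∃ (Q₀ : UltrapowerIn P₀.M W₀ B₀) (Q₁ : UltrapowerIn P₁.M W₁ B₁),
          Q₀.M = Q₁.M ∧
            ∀ x : ZFSet,
              (Q₀.j (P₀.j ⟨x, Set.mem_univ x⟩) : ZFSet) =
                (Q₁.j (P₁.j ⟨x, Set.mem_univ x⟩) : ZFSet)

/-- The tail `{β < κ : α < β}`. -/
def zTail (κ α : ZFSet) : ZFSet := ZFSet.sep (fun β => α ∈ β) κ

/-- `U` is a normal (κ-complete, nonprincipal) ultrafilter on the measurable cardinal `κ`:
a countably complete ultrafilter on `κ` containing all tails and closed under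
diagonal intersections. -/
def IsNormalUF (κ U : ZFSet) : Prop :=
  κ.IsOrdinal ∧ IsCCUF U κ ∧ (∀ α ∈ κ, zTail κ α ∈ U) ∧
    ∀ F : ZFSet, zFnOn F κ → (∀ α ∈ κ, zApp F α ∈ U) →
      ZFSet.sep (fun β => ∀ α ∈ β, β ∈ zApp F α) κ ∈ U

end

/-- The symmetric difference of two sets. -/
def zSymmDiff (a b : ZFSet) : ZFSet := (a \ b) ∪ (b \ a)

/-- The canonical wellorder of finite sets of ordinals: `a < b` iff the maximum of the
symmetric difference belongs to `b`. -/
def zCanonLT (a b : ZFSet) : Prop :=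
  ∃ m, m ∈ b ∧ m ∉ a ∧ ∀ x ∈ zSymmDiff a b, x = m ∨ x ∈ m

def zCanonLE (a b : ZFSet) : Prop := a = b ∨ zCanonLT a b

/-- `a` is a finite set of ordinals. -/
def IsFinOrdSet (a : ZFSet) : Prop := a.toSet.Finite ∧ ∀ x ∈ a, x.IsOrdinal

/-- `[a]`: the set of finite sets of ordinals canonically below `a`. -/
def zPred (a : ZFSet) : ZFSet :=
  ZFSet.sep (fun b => IsFinOrdSet b ∧ zCanonLT b a) (ZFSet.powerset (a ∪ ZFSet.sUnion a))

/-- `U` is a uniform countably complete ultrafilter with space `a`: a countably complete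
ultrafilter on `[a]` with `[b] ∉ U` for all `b < a`. -/
def IsUniformUF (U a : ZFSet) : Prop :=
  IsFinOrdSet a ∧ IsCCUF U (zPred a) ∧ ∀ b : ZFSet, zCanonLT b a → zPred b ∉ U

/-! ### Auxiliary lemmas -/

section Aux
universe v

/-- Elements of ordinals are ordinals. -/
theorem zAux_ord_of_mem_ord {x y : ZFSet.{v}} (hx : x.IsOrdinal) (hy : y ∈ x) : y.IsOrdinal := by
  constructor
  · intro a ha b hb
    exact hx.mem_trans' hb ha hy
  · intro a b c hab hbc hcy
    have hcx : c ∈ x := hx.isTransitive.mem_trans hcy hy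
    exact hx.mem_trans' hab hbc hcx

/-- Trichotomy for ZF ordinals. -/
theorem zAux_ord_tri : ∀ x y : ZFSet.{v}, x.IsOrdinal → y.IsOrdinal →
    (x ∈ y ∨ x = y ∨ y ∈ x) := by
  intro x
  induction x using ZFSet.inductionOn with
  | _ x IHx =>
    intro y
    induction y using ZFSet.inductionOn with
    | _ y IHy =>
      intro hx hy
      by_cases hxy : x ∈ y
      · exact Or.inl hxy
      by_cases hyx : y ∈ x
      · exact Or.inr (Or.inr hyx)
      refine Or.inr (Or.inl (ZFSet.ext fun z => ⟨fun hz => ?_, fun hz => ?_⟩))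
      · rcases IHx z hz y (zAux_ord_of_mem_ord hx hz) hy with h | h | h
        · exact h
        · exact absurd (h ▸ hz) hyx
        · exact absurd (hx.isTransitive.mem_trans h hz) hyx
      · rcases IHy z hz hx (zAux_ord_of_mem_ord hy hz) with h | h | h
        · exact absurd (hy.isTransitive.mem_trans h hz) hxy
        · exact absurd (h ▸ hz) hxy
        · exact h

/-- A nonempty finite set of ordinals has a maximum. -/
theorem zAux_exists_max (s : ZFSet.{v}) (hf : s.toSet.Finite)
    (hord : ∀ z ∈ s, z.IsOrdinal) (hne : ∃ z, z ∈ s) :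
    ∃ m, m ∈ s ∧ ∀ z ∈ s, z = m ∨ z ∈ m := by
  obtain ⟨m, hm, hmax⟩ := Set.Finite.exists_maximalFor ZFSet.rank s.toSet hf hne
  refine ⟨m, hm, fun z hz => ?_⟩
  rcases zAux_ord_tri z m (hord z hz) (hord m hm) with h | h | h
  · exact Or.inr h
  · exact Or.inl h
  · exact absurd (hmax hz (ZFSet.rank_lt_of_mem h).le)
      (not_le.mpr (ZFSet.rank_lt_of_mem h))

theorem zAux_mem_symmDiff {x a b : ZFSet.{v}} :
    x ∈ zSymmDiff a b ↔ (x ∈ a ∧ x ∉ b) ∨ (x ∈ b ∧ x ∉ a) := by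
  simp [zSymmDiff, ZFSet.mem_union, ZFSet.mem_sdiff]

/-- Totality of the canonical order on finite sets of ordinals. -/
theorem zAux_canon_total (a b : ZFSet.{v}) (ha : IsFinOrdSet a) (hb : IsFinOrdSet b) :
    a = b ∨ zCanonLT a b ∨ zCanonLT b a := by
  by_cases hab : a = b
  · exact Or.inl hab
  have hne : ∃ z, z ∈ zSymmDiff a b := by
    by_contra h
    push_neg at h
    refine hab (ZFSet.ext fun z => ⟨fun hz => ?_, fun hz => ?_⟩)
    · by_contra hzb
      exact h z (zAux_mem_symmDiff.mpr (Or.inl ⟨hz, hzb⟩))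
    · by_contra hza
      exact h z (zAux_mem_symmDiff.mpr (Or.inr ⟨hz, hza⟩))
  have hfin : (zSymmDiff a b).toSet.Finite := by
    refine (ha.1.union hb.1).subset ?_
    intro z hz
    rcases zAux_mem_symmDiff.mp hz with h | h
    · exact Or.inl h.1
    · exact Or.inr h.1
  have hords : ∀ z ∈ zSymmDiff a b, z.IsOrdinal := by
    intro z hz
    rcases zAux_mem_symmDiff.mp hz with h | h
    · exact ha.2 z h.1
    · exact hb.2 z h.1
  obtain ⟨m, hm, hmax⟩ := zAux_exists_max _ hfin hords hne
  rcases zAux_mem_symmDiff.mp hm with h | h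
  · refine Or.inr (Or.inr ⟨m, h.1, h.2, fun z hz => hmax z ?_⟩)
    rcases zAux_mem_symmDiff.mp hz with h' | h'
    · exact zAux_mem_symmDiff.mpr (Or.inr h')
    · exact zAux_mem_symmDiff.mpr (Or.inl h')
  · exact Or.inr (Or.inl ⟨m, h.1, h.2, hmax⟩)

/-- Transitivity of the canonical order (needing ordinal hypotheses on the
latter two sets only). -/
theorem zAux_canon_trans {x y a : ZFSet.{v}} (h1 : zCanonLT x y) (h2 : zCanonLT y a)
    (hy : ∀ o ∈ y, o.IsOrdinal) (ha : ∀ o ∈ a, o.IsOrdinal) : zCanonLT x a := by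
  obtain ⟨m₁, hm₁a, hm₁x, hmax₁⟩ := h1
  obtain ⟨m₂, hm₂a, hm₂y, hmax₂⟩ := h2
  have hne : m₁ ≠ m₂ := fun h => hm₂y (h ▸ hm₁a)
  have hom₁ : m₁.IsOrdinal := hy m₁ hm₁a
  have hom₂ : m₂.IsOrdinal := ha m₂ hm₂a
  rcases zAux_ord_tri m₁ m₂ hom₁ hom₂ with h12 | h12 | h21
  · -- m₁ ∈ m₂ : witness m₂
    refine ⟨m₂, hm₂a, ?_, ?_⟩
    · intro hm₂x
      have : m₂ = m₁ ∨ m₂ ∈ m₁ :=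
        hmax₁ m₂ (zAux_mem_symmDiff.mpr (Or.inl ⟨hm₂x, hm₂y⟩))
      rcases this with h | h
      · exact hne h.symm
      · exact ZFSet.mem_asymm h h12
    · intro z hz
      rcases zAux_mem_symmDiff.mp hz with ⟨hzx, hza⟩ | ⟨hza, hzx⟩
      · by_cases hzy : z ∈ y
        · exact hmax₂ z (zAux_mem_symmDiff.mpr (Or.inl ⟨hzy, hza⟩))
        · rcases hmax₁ z (zAux_mem_symmDiff.mpr (Or.inl ⟨hzx, hzy⟩)) with h | h
          · exact Or.inr (h ▸ h12)
          · exact Or.inr (hom₂.mem_trans h h12)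
      · by_cases hzy : z ∈ y
        · rcases hmax₁ z (zAux_mem_symmDiff.mpr (Or.inr ⟨hzy, hzx⟩)) with h | h
          · exact Or.inr (h ▸ h12)
          · exact Or.inr (hom₂.mem_trans h h12)
        · exact hmax₂ z (zAux_mem_symmDiff.mpr (Or.inr ⟨hza, hzy⟩))
  · exact absurd h12 hne
  · -- m₂ ∈ m₁ : witness m₁
    have hm₁mem : m₁ ∈ a := by
      by_contra hm₁na
      rcases hmax₂ m₁ (zAux_mem_symmDiff.mpr (Or.inl ⟨hm₁a, hm₁na⟩)) with h | h
      · exact hne h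
      · exact ZFSet.mem_asymm h h21
    refine ⟨m₁, hm₁mem, hm₁x, ?_⟩
    intro z hz
    rcases zAux_mem_symmDiff.mp hz with ⟨hzx, hza⟩ | ⟨hza, hzx⟩
    · by_cases hzy : z ∈ y
      · rcases hmax₂ z (zAux_mem_symmDiff.mpr (Or.inl ⟨hzy, hza⟩)) with h | h
        · exact Or.inr (h ▸ h21)
        · exact Or.inr (hom₁.mem_trans h h21)
      · exact hmax₁ z (zAux_mem_symmDiff.mpr (Or.inl ⟨hzx, hzy⟩))
    · by_cases hzy : z ∈ y
      · exact hmax₁ z (zAux_mem_symmDiff.mpr (Or.inr ⟨hzy, hzx⟩))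
      · rcases hmax₂ z (zAux_mem_symmDiff.mpr (Or.inr ⟨hza, hzy⟩)) with h | h
        · exact Or.inr (h ▸ h21)
        · exact Or.inr (hom₁.mem_trans h h21)

theorem zAux_mem_zPred_iff {b a : ZFSet.{v}} :
    b ∈ zPred a ↔ IsFinOrdSet b ∧ zCanonLT b a := by
  constructor
  · intro h
    exact (ZFSet.mem_sep.mp h).2
  · rintro ⟨hb, hlt⟩
    refine ZFSet.mem_sep.mpr ⟨ZFSet.mem_powerset.mpr ?_, hb, hlt⟩
    intro z hz
    rw [ZFSet.mem_union]
    by_cases hza : z ∈ a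
    · exact Or.inl hza
    obtain ⟨m, hma, hmb, hmax⟩ := hlt
    rcases hmax z (zAux_mem_symmDiff.mpr (Or.inl ⟨hz, hza⟩)) with h | h
    · exact absurd (h ▸ hz) hmb
    · exact Or.inr (ZFSet.mem_sUnion.mpr ⟨m, hma, h⟩)

theorem zAux_zPred_subset {a₁ a₀ : ZFSet.{v}} (h : zCanonLT a₁ a₀)
    (h₁ : IsFinOrdSet a₁) (h₀ : IsFinOrdSet a₀) : zPred a₁ ⊆ zPred a₀ := by
  intro b hb
  obtain ⟨hbf, hblt⟩ := zAux_mem_zPred_iff.mp hb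
  exact zAux_mem_zPred_iff.mpr ⟨hbf, zAux_canon_trans hblt h h₁.2 h₀.2⟩

end Aux
section FO
open FirstOrder FirstOrder.Language

lemma zAux_relMap_adj (M : Set ZFSet) (v : Fin 2 → M) :
    Structure.RelMap (L := setLang) (M := M) Language.adj v ↔
      ((v 0 : ZFSet) ∈ (v 1 : ZFSet)) :=
  Iff.rfl

lemma zAux_emb_mem_iff {M N : Set ZFSet} (f : Emb M N) (a b : M) :
    ((f a : ZFSet) ∈ (f b : ZFSet)) ↔ ((a : ZFSet) ∈ (b : ZFSet)) := by
  have h := f.map_rel Language.adj ![a, b]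
  rw [zAux_relMap_adj, zAux_relMap_adj] at h
  convert h using 2 <;> rfl

/-- membership atomic bounded formula -/
abbrev zAux_memB {n : ℕ} (t u : setLang.Term (Fin 2 ⊕ Fin n)) :
    setLang.BoundedFormula (Fin 2) n :=
  Relations.boundedFormula₂ Language.adj t u

/-- inner formula: (z∈x ∧ z∉y) ∨ (z∈y ∧ z∉x) → (z = m ∨ z ∈ m); x=&0 y=&1 m=&2 z=&3 -/
def zAux_innerF : setLang.BoundedFormula (Fin 2) 4 :=
  (((zAux_memB (&3) (&0)) ⊓ ∼(zAux_memB (&3) (&1))) ⊔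
      ((zAux_memB (&3) (&1)) ⊓ ∼(zAux_memB (&3) (&0)))) ⟹
    ((Term.bdEqual (&3) (&2)) ⊔ (zAux_memB (&3) (&2)))

def zAux_ltBody : setLang.BoundedFormula (Fin 2) 3 :=
  (zAux_memB (&2) (&1)) ⊓ ∼(zAux_memB (&2) (&0)) ⊓ zAux_innerF.all

def zAux_ltF : setLang.BoundedFormula (Fin 2) 2 := zAux_ltBody.ex

def zAux_psiF : setLang.BoundedFormula (Fin 2) 2 :=
  ((zAux_memB (&0) (Term.var (Sum.inl 0))) ⊓ (zAux_memB (&1) (Term.var (Sum.inl 1))) ⊓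
      zAux_ltF) ⟹ (zAux_memB (&0) (Term.var (Sum.inl 1)))

def zAux_phiF : setLang.Formula (Fin 2) := zAux_psiF.all.all

lemma zAux_realize_phiF (M : Set ZFSet) (v : Fin 2 → M) :
    zAux_phiF.Realize v ↔ ∀ x y : M,
      ((x : ZFSet) ∈ (v 0 : ZFSet) ∧ (y : ZFSet) ∈ (v 1 : ZFSet) ∧
        ∃ m : M, (m : ZFSet) ∈ (y : ZFSet) ∧ ¬ (m : ZFSet) ∈ (x : ZFSet) ∧
          ∀ z : M, (((z : ZFSet) ∈ (x : ZFSet) ∧ ¬ (z : ZFSet) ∈ (y : ZFSet)) ∨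
              ((z : ZFSet) ∈ (y : ZFSet) ∧ ¬ (z : ZFSet) ∈ (x : ZFSet))) →
            ((z : ZFSet) = (m : ZFSet) ∨ (z : ZFSet) ∈ (m : ZFSet))) →
      (x : ZFSet) ∈ (v 1 : ZFSet) := by
  simp only [zAux_phiF, zAux_psiF, zAux_ltF, zAux_ltBody, zAux_innerF, Formula.Realize,
    BoundedFormula.realize_all, BoundedFormula.realize_ex, BoundedFormula.realize_imp,
    BoundedFormula.realize_inf, BoundedFormula.realize_sup, BoundedFormula.realize_not,
    BoundedFormula.realize_bdEqual, BoundedFormula.realize_rel₂, Term.realize_var,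
    Sum.elim_inl, Sum.elim_inr, zAux_relMap_adj]
  simp [Fin.snoc, Subtype.ext_iff, show ((3:Fin 4):ℕ) = 3 from rfl,
    show ((0:Fin 2):ℕ) = 0 from rfl, show ((1:Fin 3):ℕ) = 1 from rfl,
    show ((2:Fin 4):ℕ) = 2 from rfl]

end FO
/-- If `U₀ ≤_S U₁` in the seed order (witnessed by a comparison `⟨W₀, W₁⟩` by internal
ultrafilters to a common model with `j_{W₀}([id]_{U₀}) ≤ j_{W₁}([id]_{U₁})` in the canonical
order), then `sp(U₀) ≤ sp(U₁)`. -/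
theorem space_le_of_seed_le (U₀ a₀ U₁ a₁ : ZFSet)
    (h₀ : IsUniformUF U₀ a₀) (h₁ : IsUniformUF U₁ a₁)
    (P₀ : UltrapowerIn Vclass U₀ (zPred a₀)) (P₁ : UltrapowerIn Vclass U₁ (zPred a₁))
    (W₀ B₀ W₁ B₁ : ZFSet) (hW₀ : W₀ ∈ P₀.M) (hW₁ : W₁ ∈ P₁.M)
    (hcc₀ : IsCCUF W₀ B₀) (hcc₁ : IsCCUF W₁ B₁)
    (Q₀ : UltrapowerIn P₀.M W₀ B₀) (Q₁ : UltrapowerIn P₁.M W₁ B₁)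
    (hM : Q₀.M = Q₁.M)
    (hcomm : ∀ x : ZFSet,
      (Q₀.j (P₀.j ⟨x, Set.mem_univ x⟩) : ZFSet) = (Q₁.j (P₁.j ⟨x, Set.mem_univ x⟩) : ZFSet))
    (hseed : zCanonLE (Q₀.j ⟨P₀.seed, P₀.seed_mem⟩ : ZFSet)
      (Q₁.j ⟨P₁.seed, P₁.seed_mem⟩ : ZFSet)) :
    zCanonLE a₀ a₁ := by
  by_contra hcon
  have hlt : zCanonLT a₁ a₀ := by
    rcases zAux_canon_total a₀ a₁ h₀.1 h₁.1 with h | h | h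
    · exact absurd (Or.inl h) hcon
    · exact absurd (Or.inr h) hcon
    · exact h
  -- names
  set s₁ : ↥Q₁.M := Q₁.j ⟨P₁.seed, P₁.seed_mem⟩ with hs₁def
  set s₀' : ↥Q₀.M := Q₀.j ⟨P₀.seed, P₀.seed_mem⟩ with hs₀'def
  have hs₀N : (s₀' : ZFSet) ∈ Q₁.M := hM ▸ s₀'.2
  set s₀ : ↥Q₁.M := ⟨(s₀' : ZFSet), hs₀N⟩ with hs₀def
  set ip₀ : ↥Q₁.M := Q₁.j (P₁.j ⟨zPred a₀, Set.mem_univ _⟩) with hip₀def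
  set ip₁ : ↥Q₁.M := Q₁.j (P₁.j ⟨zPred a₁, Set.mem_univ _⟩) with hip₁def
  -- (1) s₁ ∈ ip₁
  have h1 : (s₁ : ZFSet) ∈ (ip₁ : ZFSet) :=
    (zAux_emb_mem_iff Q₁.j ⟨P₁.seed, P₁.seed_mem⟩ (P₁.j ⟨zPred a₁, Set.mem_univ _⟩)).mpr
      ((P₁.derived (zPred a₁) (Set.mem_univ _) (fun _ h => h)).mp h₁.2.1.top_mem)
  -- (2) s₀ ∉ ip₁
  have hsub : zPred a₁ ⊆ zPred a₀ := zAux_zPred_subset hlt h₁.1 h₀.1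
  have h2 : ¬ (s₀ : ZFSet) ∈ (ip₁ : ZFSet) := by
    intro hmem
    rw [hip₁def, ← hcomm (zPred a₁)] at hmem
    exact (h₀.2.2 a₁ hlt)
      ((P₀.derived (zPred a₁) (Set.mem_univ _) hsub).mpr
        ((zAux_emb_mem_iff Q₀.j ⟨P₀.seed, P₀.seed_mem⟩
          (P₀.j ⟨zPred a₁, Set.mem_univ _⟩)).mp hmem))
  -- (4) s₀ ∈ ip₀
  have h4 : (s₀ : ZFSet) ∈ (ip₀ : ZFSet) := by
    have hmem := (zAux_emb_mem_iff Q₀.j ⟨P₀.seed, P₀.seed_mem⟩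
        (P₀.j ⟨zPred a₀, Set.mem_univ _⟩)).mpr
      ((P₀.derived (zPred a₀) (Set.mem_univ _) (fun _ h => h)).mp h₀.2.1.top_mem)
    rw [hip₀def, ← hcomm (zPred a₀)]
    exact hmem
  -- seed comparison in the common model
  have hltS : zCanonLT (s₀ : ZFSet) (s₁ : ZFSet) := by
    rcases hseed with h | h
    · exact absurd (show (s₀ : ZFSet) ∈ (ip₁ : ZFSet) from h ▸ h1) h2
    · exact h
  -- V-truth of the downward-closedness formula
  have hV : zAux_phiF.Realize
      (M := ↥Vclass) ![⟨zPred a₀, Set.mem_univ _⟩, ⟨zPred a₁, Set.mem_univ _⟩] := by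
    rw [zAux_realize_phiF]
    simp only [Matrix.cons_val_zero, Matrix.cons_val_one, Matrix.head_cons]
    rintro x y ⟨hx, hy, m, hm1, hm2, hz⟩
    obtain ⟨hxf, hxlt⟩ := zAux_mem_zPred_iff.mp hx
    obtain ⟨hyf, hylt⟩ := zAux_mem_zPred_iff.mp hy
    have hxy : zCanonLT (x : ZFSet) (y : ZFSet) := by
      refine ⟨(m : ZFSet), hm1, hm2, fun z hzs => ?_⟩
      exact hz ⟨z, Set.mem_univ z⟩ (zAux_mem_symmDiff.mp hzs)
    exact zAux_mem_zPred_iff.mpr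
      ⟨hxf, zAux_canon_trans hxy hylt hyf.2 h₁.1.2⟩
  -- transfer to the common model
  have hN : zAux_phiF.Realize (M := ↥Q₁.M) ![ip₀, ip₁] := by
    have hV1 := (P₁.j.map_formula zAux_phiF
      ![⟨zPred a₀, Set.mem_univ _⟩, ⟨zPred a₁, Set.mem_univ _⟩]).mpr hV
    have hV2 := (Q₁.j.map_formula zAux_phiF _).mpr hV1
    convert hV2 using 1
    funext i
    fin_cases i <;> simp [hip₀def, hip₁def, Function.comp]
  rw [zAux_realize_phiF] at hN
  have hfin := hN s₀ s₁
  simp only [Matrix.cons_val_zero, Matrix.cons_val_one, Matrix.head_cons] at hfin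
  refine h2 (hfin ⟨h4, h1, ?_⟩)
  obtain ⟨m, hm1, hm2, hmz⟩ := hltS
  have hmN : m ∈ Q₁.M := Q₁.inner.1 (s₁ : ZFSet) s₁.2 m hm1
  exact ⟨⟨m, hmN⟩, hm1, hm2, fun z hcase =>
    hmz (z : ZFSet) (zAux_mem_symmDiff.mpr hcase)⟩
end

section
/- Solovay's Lemma: if λ is a regular uncountable cardinal, ⟨S_α : α < λ⟩ is a partition of {ξ < λ : cf(ξ) = ω} into stationary sets, and j : V → M is elementary with j[λ] ∈ M, then j[λ] = {α < sup j[λ] : in M, the set j(⟨S_α⟩)_α is stationary in sup j[λ]} — i.e., j[λ] is definable in M from j(⟨S_α : α < λ⟩) and sup j[λ]. -/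
/-- `κ` is a cardinal: an ordinal onto which no smaller ordinal surjects. -/
def zIsCardinal (κ : ZFSet) : Prop :=
  κ.IsOrdinal ∧ ∀ β ∈ κ, ∀ f : ZFSet, zFnOn f β → ∃ γ ∈ κ, ∀ α ∈ β, zApp f α ≠ γ

/-- `κ` is a regular (ordinal, equivalently cardinal): no function from a smaller
ordinal into `κ` is cofinal. -/
def zRegular (κ : ZFSet) : Prop :=
  κ.IsOrdinal ∧ ∀ β ∈ κ, ∀ f : ZFSet, zFnOn f β → (∀ α ∈ β, zApp f α ∈ κ) →
    ∃ γ ∈ κ, ∀ α ∈ β, zApp f α ∈ γ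

/-- `ξ` has cofinality `ω`: there is an `ω`-sequence of elements of `ξ` cofinal in `ξ`. -/
def zCofOmega (ξ : ZFSet) : Prop :=
  ∃ f : ℕ → ZFSet, (∀ n, f n ∈ ξ) ∧ ∀ α ∈ ξ, ∃ n, α ∈ f n

def zUnbounded (C δ : ZFSet) : Prop := ∀ α ∈ δ, ∃ β ∈ C, α ∈ β

def zClosed (C δ : ZFSet) : Prop :=
  ∀ α ∈ δ, α ≠ ∅ → (∀ β ∈ α, ∃ γ, γ ∈ C ∧ γ ∈ α ∧ β ∈ γ) → α ∈ C

/-- `C` is a closed unbounded subset of `δ`. -/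
def zClub (C δ : ZFSet) : Prop := C ⊆ δ ∧ zClosed C δ ∧ zUnbounded C δ

/-- `S` is stationary in `δ`. -/
def zStationary (S δ : ZFSet) : Prop := ∀ C : ZFSet, zClub C δ → ∃ x, x ∈ S ∧ x ∈ C

/-- `S` is stationary in `δ` in the sense of the model `M` (it meets every club of `δ`
lying in `M`). -/
def zStationaryIn (M : Set ZFSet) (S δ : ZFSet) : Prop :=
  ∀ C : ZFSet, C ∈ M → zClub C δ → ∃ x, x ∈ S ∧ x ∈ C


section SolovayInfra
set_option linter.unusedSectionVars false
set_option linter.unusedVariables false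

namespace SolovayPf
open ZFSet

/-! ### Ordinal basics -/

theorem isOrdinal_of_mem {x y : ZFSet.{u}} (hx : x.IsOrdinal) (h : y ∈ x) : y.IsOrdinal := by
  constructor
  · intro a ha b hb
    exact hx.mem_trans' hb ha h
  · intro a b c hab hbc hcy
    have hcx : c ∈ x := hx.mem_trans hcy h
    exact hx.mem_trans' hab hbc hcx

theorem ord_trichotomy : ∀ x : ZFSet.{u}, x.IsOrdinal → ∀ y : ZFSet.{u}, y.IsOrdinal →
    x ∈ y ∨ x = y ∨ y ∈ x := by
  intro x
  induction x using ZFSet.inductionOn with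
  | _ x IHx =>
    intro hx y
    induction y using ZFSet.inductionOn with
    | _ y IHy =>
      intro hy
      by_cases hxy : x ∈ y
      · exact Or.inl hxy
      by_cases hyx : y ∈ x
      · exact Or.inr (Or.inr hyx)
      refine Or.inr (Or.inl (ZFSet.ext fun z => ⟨fun hz => ?_, fun hz => ?_⟩))
      · rcases IHx z hz (isOrdinal_of_mem hx hz) y hy with h | h | h
        · exact h
        · subst h; exact absurd hz hyx
        · exact absurd (hx.mem_trans h hz) hyx
      · rcases IHy z hz (isOrdinal_of_mem hy hz) with h | h | h
        · exact absurd (hy.mem_trans h hz) hxy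
        · subst h; exact absurd hz hxy
        · exact h

theorem ord_mem_of_subset {x y : ZFSet.{u}} (hx : x.IsOrdinal) (hy : y.IsOrdinal)
    (h : x ⊆ y) (hne : x ≠ y) : x ∈ y := by
  rcases ord_trichotomy x hx y hy with h' | h' | h'
  · exact h'
  · exact absurd h' hne
  · exact absurd (h h') (ZFSet.mem_irrefl y)

/-- `x ≤ t` and `t ∈ d` implies `x ∈ d`, for ordinals. -/
theorem ord_mem_of_le_of_mem {x t d : ZFSet.{u}} (hd : d.IsOrdinal)
    (h1 : x ∈ t ∨ x = t) (h2 : t ∈ d) : x ∈ d := by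
  rcases h1 with h | rfl
  · exact hd.mem_trans h h2
  · exact h2

theorem sUnion_isOrdinal {x : ZFSet.{u}} (h : ∀ a ∈ x, ZFSet.IsOrdinal a) :
    (⋃₀ x : ZFSet).IsOrdinal := by
  constructor
  · exact ZFSet.IsTransitive.sUnion' fun a ha => (h a ha).isTransitive
  · intro a b c hab hbc hc
    rcases ZFSet.mem_sUnion.1 hc with ⟨w, hw, hcw⟩
    exact (isOrdinal_of_mem (h w hw) hcw).mem_trans hab hbc

/-! ### naturals -/

def zNat : ℕ → ZFSet.{u}
  | 0 => ∅
  | n + 1 => insert (zNat n) (zNat n)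

theorem zNat_mem_omega (n : ℕ) : zNat.{u} n ∈ ZFSet.omega.{u} := by
  induction n with
  | zero => exact ZFSet.omega_zero
  | succ n ih => exact ZFSet.omega_succ ih

theorem zNat_lt {n m : ℕ} (h : n < m) : zNat.{u} n ∈ zNat.{u} m := by
  induction m with
  | zero => omega
  | succ m ih =>
    rcases Nat.lt_succ_iff_lt_or_eq.1 h with h' | h'
    · exact ZFSet.mem_insert_of_mem _ (ih h')
    · subst h'; exact ZFSet.mem_insert _ _

theorem zNat_inj {n m : ℕ} (h : zNat.{u} n = zNat.{u} m) : n = m := by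
  rcases Nat.lt_trichotomy n m with h' | h' | h'
  · exact absurd (h ▸ zNat_lt h') (ZFSet.mem_irrefl _)
  · exact h'
  · exact absurd (h ▸ zNat_lt h') (ZFSet.mem_irrefl _)

theorem mk_ofNat (n : ℕ) : ZFSet.mk (PSet.ofNat n) = zNat.{u} n := by
  induction n with
  | zero => rfl
  | succ n ih => show ZFSet.mk (PSet.insert _ _) = _; rw [show ZFSet.mk (PSet.insert (PSet.ofNat n) (PSet.ofNat n)) = insert (ZFSet.mk (PSet.ofNat n)) (ZFSet.mk (PSet.ofNat n)) from rfl, ih]; rfl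

theorem mem_omega_iff {x : ZFSet.{u}} : x ∈ ZFSet.omega.{u} ↔ ∃ n : ℕ, x = zNat n := by
  constructor
  · intro h
    rw [← ZFSet.mk_out x] at h
    rcases h with ⟨b, hb⟩
    refine ⟨b.down, ?_⟩
    rw [← ZFSet.mk_out x, ← mk_ofNat]
    exact Quotient.sound hb
  · rintro ⟨n, rfl⟩
    exact zNat_mem_omega n


/-! ### function application -/

theorem pair_snd_mem_sUnion_sUnion {f x y : ZFSet.{u}} (h : ZFSet.pair x y ∈ f) :
    y ∈ (⋃₀ (⋃₀ f) : ZFSet) := by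
  apply ZFSet.mem_sUnion.2 ⟨{x, y}, ?_, ?_⟩
  · exact ZFSet.mem_sUnion.2 ⟨ZFSet.pair x y, h, ZFSet.mem_insert_of_mem _ (ZFSet.mem_insert _ _)⟩
  · exact ZFSet.mem_insert_of_mem _ (ZFSet.mem_insert _ _)

theorem zApp_eq {f x y : ZFSet.{u}}
    (huniq : ∀ y y' : ZFSet, ZFSet.pair x y ∈ f → ZFSet.pair x y' ∈ f → y = y')
    (h : ZFSet.pair x y ∈ f) : zApp f x = y := by
  have hsep : ZFSet.sep (fun y => ZFSet.pair x y ∈ f) (⋃₀ (⋃₀ f)) = ({y} : ZFSet) := by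
    apply ZFSet.ext
    intro z
    rw [ZFSet.mem_sep, ZFSet.mem_singleton]
    constructor
    · rintro ⟨-, hz⟩; exact huniq z y hz h
    · rintro rfl; exact ⟨pair_snd_mem_sUnion_sUnion h, h⟩
  rw [zApp, hsep, ZFSet.sUnion_singleton]

noncomputable def zGraph (d : ZFSet.{u}) (g : ZFSet.{u} → ZFSet.{u}) : ZFSet.{u} :=
  @ZFSet.image (fun α => ZFSet.pair α (g α)) (Classical.allZFSetDefinable _) d

theorem mem_zGraph {d : ZFSet.{u}} {g} {x : ZFSet.{u}} :
    x ∈ zGraph d g ↔ ∃ α ∈ d, x = ZFSet.pair α (g α) := by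
  rw [zGraph, @ZFSet.mem_image _ (Classical.allZFSetDefinable _)]
  exact ⟨fun ⟨a, ha, he⟩ => ⟨a, ha, he.symm⟩, fun ⟨a, ha, he⟩ => ⟨a, ha, he.symm⟩⟩

theorem zGraph_uniq {d : ZFSet.{u}} {g} {x y y' : ZFSet.{u}}
    (h : ZFSet.pair x y ∈ zGraph d g) (h' : ZFSet.pair x y' ∈ zGraph d g) : y = y' := by
  rcases mem_zGraph.1 h with ⟨a, _, he⟩
  rcases mem_zGraph.1 h' with ⟨a', _, he'⟩
  obtain ⟨rfl, rfl⟩ := ZFSet.pair_injective he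
  obtain ⟨rfl, rfl⟩ := ZFSet.pair_injective he'
  rfl

theorem zFnOn_zGraph {d : ZFSet.{u}} {g} : zFnOn (zGraph d g) d := by
  refine ⟨⟨fun p hp => ?_, fun x y y' h h' => zGraph_uniq h h'⟩, fun x => ?_⟩
  · rcases mem_zGraph.1 hp with ⟨a, _, he⟩; exact ⟨a, g a, he⟩
  · constructor
    · rintro ⟨y, hy⟩
      rcases mem_zGraph.1 hy with ⟨a, ha, he⟩
      obtain ⟨rfl, rfl⟩ := ZFSet.pair_injective he
      exact ha
    · intro hx; exact ⟨g x, mem_zGraph.2 ⟨x, hx, rfl⟩⟩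

theorem zApp_zGraph {d : ZFSet.{u}} {g} {α : ZFSet.{u}} (h : α ∈ d) :
    zApp (zGraph d g) α = g α :=
  zApp_eq (fun _ _ => zGraph_uniq) (mem_zGraph.2 ⟨α, h, rfl⟩)

/-! ### regularity helpers -/

section reg
variable {lam : ZFSet.{u}} (hreg : zRegular lam) (hunc : ZFSet.omega.{u} ∈ lam)
include hreg

theorem lam_ord : lam.IsOrdinal := hreg.1

include hunc in
theorem lam_succ : ∀ α ∈ lam, ∃ γ ∈ lam, α ∈ γ := by
  intro α hα
  have h1 : zNat.{u} 1 ∈ lam := hreg.1.mem_trans (zNat_mem_omega 1) hunc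
  obtain ⟨γ, hγ, hb⟩ := hreg.2 (zNat 1) h1 (zGraph (zNat 1) fun _ => α) zFnOn_zGraph
    (fun x hx => by rw [zApp_zGraph hx]; exact hα)
  refine ⟨γ, hγ, ?_⟩
  have h0 : (∅ : ZFSet) ∈ zNat.{u} 1 := ZFSet.mem_insert _ _
  have := hb ∅ h0
  rwa [zApp_zGraph h0] at this

include hunc in
theorem max2 : ∀ a ∈ lam, ∀ b ∈ lam, ∃ γ ∈ lam, a ∈ γ ∧ b ∈ γ := by
  intro a ha b hb
  have hao := isOrdinal_of_mem hreg.1 ha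
  have hbo := isOrdinal_of_mem hreg.1 hb
  rcases ord_trichotomy a hao b hbo with h | h | h
  · obtain ⟨γ, hγ, hbγ⟩ := lam_succ hreg hunc b hb
    exact ⟨γ, hγ, (isOrdinal_of_mem hreg.1 hγ).mem_trans h hbγ, hbγ⟩
  · obtain ⟨γ, hγ, hbγ⟩ := lam_succ hreg hunc b hb
    exact ⟨γ, hγ, h ▸ hbγ, hbγ⟩
  · obtain ⟨γ, hγ, haγ⟩ := lam_succ hreg hunc a ha
    exact ⟨γ, hγ, haγ, (isOrdinal_of_mem hreg.1 hγ).mem_trans h haγ⟩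

include hunc in
theorem omega_sup_bound (θ : ℕ → ZFSet.{u}) (hθ : ∀ n, θ n ∈ lam) :
    ∃ γ ∈ lam, ∀ n, θ n ∈ γ := by
  classical
  set θ' : ZFSet.{u} → ZFSet.{u} := fun k => if h : ∃ n : ℕ, k = zNat n then θ h.choose else ∅
    with hθ'def
  have hθ' : ∀ n : ℕ, θ' (zNat n) = θ n := by
    intro n
    have h : ∃ m : ℕ, zNat.{u} n = zNat m := ⟨n, rfl⟩
    rw [hθ'def]
    simp only [dif_pos h]
    congr 1
    exact (zNat_inj h.choose_spec).symm
  obtain ⟨γ, hγ, hb⟩ := hreg.2 ZFSet.omega hunc (zGraph ZFSet.omega θ') zFnOn_zGraph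
    (fun x hx => by
      rw [zApp_zGraph hx]
      obtain ⟨n, rfl⟩ := mem_omega_iff.1 hx
      rw [hθ']; exact hθ n)
  refine ⟨γ, hγ, fun n => ?_⟩
  have := hb (zNat n) (zNat_mem_omega n)
  rwa [zApp_zGraph (zNat_mem_omega n), hθ'] at this

omit hreg in
theorem mem_sup_range {θ : ℕ → ZFSet.{u}} {x : ZFSet.{u}} :
    x ∈ (⋃₀ ZFSet.range θ : ZFSet) ↔ ∃ n, x ∈ θ n := by
  rw [ZFSet.mem_sUnion]
  constructor
  · rintro ⟨z, hz, hx⟩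
    rcases ZFSet.mem_range.1 hz with ⟨n, rfl⟩
    exact ⟨n, hx⟩
  · rintro ⟨n, hx⟩
    exact ⟨θ n, ZFSet.mem_range.2 ⟨n, rfl⟩, hx⟩

include hunc in
theorem sup_range_mem_lam (θ : ℕ → ZFSet.{u}) (hθ : ∀ n, θ n ∈ lam) :
    (⋃₀ ZFSet.range θ : ZFSet) ∈ lam := by
  obtain ⟨γ, hγ, hb⟩ := omega_sup_bound hreg hunc θ hθ
  have hγo := isOrdinal_of_mem hreg.1 hγ
  have hξo : (⋃₀ ZFSet.range θ : ZFSet).IsOrdinal := by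
    apply sUnion_isOrdinal
    intro a ha
    rcases ZFSet.mem_range.1 ha with ⟨n, rfl⟩
    exact isOrdinal_of_mem hreg.1 (hθ n)
  have hsub : (⋃₀ ZFSet.range θ : ZFSet) ⊆ γ := by
    intro z hz
    rcases mem_sup_range.1 hz with ⟨n, hn⟩
    exact hγo.mem_trans hn (hb n)
  rcases eq_or_ne (⋃₀ ZFSet.range θ : ZFSet) γ with h | h
  · rwa [h]
  · exact hreg.1.mem_trans (ord_mem_of_subset hξo hγo hsub h) hγ

include hunc in
theorem closure_lemma (g : ZFSet.{u} → ZFSet.{u}) (hg : ∀ α ∈ lam, g α ∈ lam) :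
    ∀ α₀ ∈ lam, ∃ ξ ∈ lam, α₀ ∈ ξ ∧ (∀ α ∈ ξ, g α ∈ ξ) ∧ (∀ α ∈ ξ, ∃ α' ∈ ξ, α ∈ α') ∧ ξ ≠ ∅ := by
  classical
  intro α₀ hα₀
  have step : ∀ a, a ∈ lam → ∃ b, b ∈ lam ∧ a ∈ b ∧ ∀ α ∈ a, g α ∈ b := by
    intro a ha
    obtain ⟨γ₁, hγ₁, hb1⟩ := hreg.2 a ha (zGraph a g) zFnOn_zGraph
      (fun x hx => by rw [zApp_zGraph hx]; exact hg x (hreg.1.mem_trans hx ha))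
    obtain ⟨γ, hγ, hγ₁γ, haγ⟩ := max2 hreg hunc γ₁ hγ₁ a ha
    refine ⟨γ, hγ, haγ, fun α hα => ?_⟩
    have := hb1 α hα
    rw [zApp_zGraph hα] at this
    exact (isOrdinal_of_mem hreg.1 hγ).mem_trans this hγ₁γ
  set θ : ℕ → ZFSet.{u} := fun n => Nat.rec (Classical.choose (lam_succ hreg hunc α₀ hα₀))
    (fun _ x => if hx : x ∈ lam then Classical.choose (step x hx) else ∅) n with hθdef
  have hθ0 : θ 0 ∈ lam ∧ α₀ ∈ θ 0 := by
    have := Classical.choose_spec (lam_succ hreg hunc α₀ hα₀)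
    exact ⟨this.1, this.2⟩
  have hθs : ∀ n, θ n ∈ lam → θ (n + 1) ∈ lam ∧ θ n ∈ θ (n + 1) ∧ ∀ α ∈ θ n, g α ∈ θ (n + 1) := by
    intro n hn
    have key : θ (n + 1) = Classical.choose (step (θ n) hn) := by
      show (if hx : θ n ∈ lam then Classical.choose (step (θ n) hx) else ∅) = _
      rw [dif_pos hn]
    rw [key]
    exact Classical.choose_spec (step (θ n) hn)
  have hmem : ∀ n, θ n ∈ lam := by
    intro n
    induction n with
    | zero => exact hθ0.1
    | succ n ih => exact (hθs n ih).1
  refine ⟨⋃₀ ZFSet.range θ, sup_range_mem_lam hreg hunc θ hmem, ?_, ?_, ?_, ?_⟩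
  · exact mem_sup_range.2 ⟨0, hθ0.2⟩
  · intro α hα
    rcases mem_sup_range.1 hα with ⟨n, hn⟩
    exact mem_sup_range.2 ⟨n + 1, (hθs n (hmem n)).2.2 α hn⟩
  · intro α hα
    rcases mem_sup_range.1 hα with ⟨n, hn⟩
    exact ⟨θ n, mem_sup_range.2 ⟨n + 1, (hθs n (hmem n)).2.1⟩, hn⟩
  · intro h
    have := mem_sup_range.2 ⟨0, hθ0.2⟩
    rw [h] at this
    exact ZFSet.notMem_empty _ this

end reg
/-! ### cofinality omega via sets -/

def MaxSeg (c : ZFSet.{u}) : Prop :=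
  ∀ b ∈ c, (∃ d ∈ c, d ∈ b) → ∃ m ∈ c, m ∈ b ∧ ∀ d ∈ c, d ∈ b → d ∈ m ∨ d = m

def OmegaSeq (ξ c : ZFSet.{u}) : Prop :=
  (∀ d ∈ c, d ∈ ξ) ∧ (∀ α ∈ ξ, ∃ b ∈ c, α ∈ b) ∧ MaxSeg c

theorem union2_isOrdinal {x y : ZFSet.{u}} (hx : x.IsOrdinal) (hy : y.IsOrdinal) :
    (x ∪ y).IsOrdinal := by
  constructor
  · intro a ha b hb
    rcases ZFSet.mem_union.1 ha with h | h
    · exact ZFSet.mem_union.2 (Or.inl (hx.subset_of_mem h hb))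
    · exact ZFSet.mem_union.2 (Or.inr (hy.subset_of_mem h hb))
  · intro a b w hab hbw hwu
    rcases ZFSet.mem_union.1 hwu with h | h
    · exact (isOrdinal_of_mem hx h).mem_trans hab hbw
    · exact (isOrdinal_of_mem hy h).mem_trans hab hbw

theorem union2_eq {x y : ZFSet.{u}} (hx : x.IsOrdinal) (hy : y.IsOrdinal) :
    x ∪ y = x ∨ x ∪ y = y := by
  rcases ord_trichotomy x hx y hy with h | h | h
  · right; apply ZFSet.ext; intro z
    rw [ZFSet.mem_union]
    exact ⟨fun hz => hz.elim (fun hz => hy.mem_trans hz h) id, Or.inr⟩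
  · right; subst h; apply ZFSet.ext; intro z; rw [ZFSet.mem_union]; exact ⟨fun hz => hz.elim id id, Or.inr⟩
  · left; apply ZFSet.ext; intro z
    rw [ZFSet.mem_union]
    exact ⟨fun hz => hz.elim id (fun hz => hx.mem_trans hz h), Or.inl⟩

theorem subset_union_left' {x y : ZFSet.{u}} : x ⊆ x ∪ y := fun z hz => ZFSet.mem_union.2 (Or.inl hz)
theorem subset_union_right' {x y : ZFSet.{u}} : y ⊆ x ∪ y := fun z hz => ZFSet.mem_union.2 (Or.inr hz)

theorem le_of_subset {x y : ZFSet.{u}} (hx : x.IsOrdinal) (hy : y.IsOrdinal) (h : x ⊆ y) :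
    x ∈ y ∨ x = y := by
  rcases eq_or_ne x y with h' | h'
  · exact Or.inr h'
  · exact Or.inl (ord_mem_of_subset hx hy h h')

theorem omegaSeq_of_cofOmega {ξ : ZFSet.{u}} (hξ : ξ.IsOrdinal) (h : zCofOmega ξ) :
    ∃ c : ZFSet.{u}, OmegaSeq ξ c := by
  classical
  obtain ⟨f, hf1, hf2⟩ := h
  have hford : ∀ n, (f n).IsOrdinal := fun n => isOrdinal_of_mem hξ (hf1 n)
  set g : ℕ → ZFSet.{u} := fun n => Nat.rec (f 0)
    (fun n x => if h : (x ∪ f n) ∈ ξ then f (Classical.choose (hf2 _ h)) else ∅) n with hgdef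
  have hg0 : g 0 = f 0 := rfl
  have hgmem : ∀ n, g n ∈ ξ := by
    intro n
    induction n with
    | zero => exact hf1 0
    | succ n ih =>
      have hu : (g n ∪ f n) ∈ ξ := by
        rcases union2_eq (isOrdinal_of_mem hξ ih) (hford n) with h | h <;> rw [h]
        exacts [ih, hf1 n]
      have key : g (n + 1) = f (Classical.choose (hf2 _ hu)) := by
        show (if h : (g n ∪ f n) ∈ ξ then f (Classical.choose (hf2 _ h)) else ∅) = _
        rw [dif_pos hu]
      rw [key]; exact hf1 _
  have hgstep : ∀ n, g n ∈ g (n + 1) ∧ f n ∈ g (n + 1) ∨ False := by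
    intro n
    left
    have ordgn := isOrdinal_of_mem hξ (hgmem n)
    have hu : (g n ∪ f n) ∈ ξ := by
      rcases union2_eq ordgn (hford n) with h | h <;> rw [h]
      exacts [hgmem n, hf1 n]
    have key : g (n + 1) = f (Classical.choose (hf2 _ hu)) := by
      show (if h : (g n ∪ f n) ∈ ξ then f (Classical.choose (hf2 _ h)) else ∅) = _
      rw [dif_pos hu]
    have hspec : (g n ∪ f n) ∈ g (n + 1) := by rw [key]; exact Classical.choose_spec (hf2 _ hu)
    have ordg1 := isOrdinal_of_mem hξ (hgmem (n + 1))
    constructor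
    · rcases le_of_subset ordgn (union2_isOrdinal ordgn (hford n)) subset_union_left' with h | h
      · exact ordg1.mem_trans h hspec
      · rwa [h]
    · rcases le_of_subset (hford n) (union2_isOrdinal ordgn (hford n)) subset_union_right' with h | h
      · exact ordg1.mem_trans h hspec
      · rwa [h]
  have hgs : ∀ n, g n ∈ g (n + 1) := fun n => ((hgstep n).resolve_right id).1
  have hfs : ∀ n, f n ∈ g (n + 1) := fun n => ((hgstep n).resolve_right id).2
  have hincr : ∀ m n : ℕ, m < n → g m ∈ g n := by
    intro m n h
    induction n with
    | zero => omega
    | succ n ih =>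
      rcases Nat.lt_succ_iff_lt_or_eq.1 h with h' | h'
      · exact (isOrdinal_of_mem hξ (hgmem (n + 1))).mem_trans (ih h') (hgs n)
      · subst h'; exact hgs m
  refine ⟨ZFSet.range g, fun d hd => ?_, fun α hα => ?_, fun b hb hseg => ?_⟩
  · rcases ZFSet.mem_range.1 hd with ⟨n, rfl⟩; exact hgmem n
  · rcases hf2 α hα with ⟨n, hn⟩
    exact ⟨g (n + 1), ZFSet.mem_range.2 ⟨n + 1, rfl⟩,
      (isOrdinal_of_mem hξ (hgmem (n + 1))).mem_trans hn (hfs n)⟩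
  · rcases ZFSet.mem_range.1 hb with ⟨n, rfl⟩
    rcases hseg with ⟨d, hdc, hdb⟩
    rcases ZFSet.mem_range.1 hdc with ⟨m, rfl⟩
    -- n cannot be 0
    cases n with
    | zero =>
      exfalso
      rcases Nat.eq_zero_or_pos m with rfl | hm
      · exact ZFSet.mem_irrefl _ hdb
      · exact ZFSet.mem_asymm hdb (hincr 0 m hm)
    | succ n =>
      refine ⟨g n, ZFSet.mem_range.2 ⟨n, rfl⟩, hgs n, ?_⟩
      intro d hdc hdb'
      rcases ZFSet.mem_range.1 hdc with ⟨k, rfl⟩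
      rcases Nat.lt_trichotomy k (n + 1) with hk | hk | hk
      · rcases Nat.lt_succ_iff_lt_or_eq.1 hk with hk' | hk'
        · exact Or.inl (hincr k n hk')
        · exact Or.inr (by rw [hk'])
      · exfalso; rw [hk] at hdb'; exact ZFSet.mem_irrefl _ hdb'
      · exact absurd (hincr (n + 1) k hk) (ZFSet.mem_asymm hdb')

theorem cofOmega_of_omegaSeq {ξ c : ZFSet.{u}} (hξ : ξ.IsOrdinal) (hne : ξ ≠ ∅)
    (hc : OmegaSeq ξ c) : zCofOmega ξ := by
  classical
  obtain ⟨hsub, hunb, hms⟩ := hc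
  have hcord : ∀ d ∈ c, ZFSet.IsOrdinal d := fun d hd => isOrdinal_of_mem hξ (hsub d hd)
  have hcne : ∃ b, b ∈ c := by
    have : ∃ α, α ∈ ξ := by
      by_contra h
      push_neg at h
      exact hne ((ZFSet.eq_empty ξ).2 h)
    rcases this with ⟨α, hα⟩
    rcases hunb α hα with ⟨b, hb, _⟩
    exact ⟨b, hb⟩
  set f : ℕ → ZFSet.{u} := fun n => Nat.rec (ZFSet.mem_wf.min {d | d ∈ c} hcne)
    (fun _ x => if h : ({d : ZFSet | d ∈ c ∧ x ∈ d}).Nonempty then ZFSet.mem_wf.min _ h else ∅) n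
    with hfdef
  have hf0 : f 0 ∈ c := ZFSet.mem_wf.min_mem {d | d ∈ c} hcne
  have hf0min : ∀ d ∈ c, d ∉ f 0 := fun d hd => ZFSet.mem_wf.not_lt_min {d | d ∈ c} hd
  have hfmem : ∀ n, f n ∈ c := by
    intro n
    induction n with
    | zero => exact hf0
    | succ n ih =>
      have hnonempty : ({d : ZFSet.{u} | d ∈ c ∧ f n ∈ d}).Nonempty := by
        rcases hunb (f n) (hsub _ ih) with ⟨b, hb, hfb⟩
        exact ⟨b, hb, hfb⟩
      have key : f (n + 1) = ZFSet.mem_wf.min _ hnonempty := by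
        show (if h : ({d : ZFSet.{u} | d ∈ c ∧ f n ∈ d}).Nonempty then ZFSet.mem_wf.min _ h else ∅) = _
        rw [dif_pos hnonempty]
      rw [key]
      exact (ZFSet.mem_wf.min_mem _ hnonempty).1
  have henum : ∀ b : ZFSet.{u}, b ∈ c → ∃ n, f n = b := by
    intro b
    induction b using ZFSet.inductionOn with
    | _ b IH =>
      intro hb
      by_cases hseg : ∃ d ∈ c, d ∈ b
      · obtain ⟨m, hmc, hmb, hmax⟩ := hms b hb hseg
        obtain ⟨n, hn⟩ := IH m hmb hmc
        have hnonempty : ({d : ZFSet.{u} | d ∈ c ∧ f n ∈ d}).Nonempty := ⟨b, hb, hn ▸ hmb⟩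
        have key : f (n + 1) = ZFSet.mem_wf.min _ hnonempty := by
          show (if h : ({d : ZFSet.{u} | d ∈ c ∧ f n ∈ d}).Nonempty then ZFSet.mem_wf.min _ h else ∅) = _
          rw [dif_pos hnonempty]
        have hmem1 := ZFSet.mem_wf.min_mem _ hnonempty
        have hnotb : ¬ b ∈ ZFSet.mem_wf.min {d : ZFSet.{u} | d ∈ c ∧ f n ∈ d} hnonempty :=
          ZFSet.mem_wf.not_lt_min {d : ZFSet.{u} | d ∈ c ∧ f n ∈ d} ⟨hb, hn ▸ hmb⟩
        refine ⟨n + 1, ?_⟩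
        rw [key]
        rcases ord_trichotomy _ (hcord _ hmem1.1) b (hcord b hb) with h | h | h
        · exfalso
          rcases hmax _ hmem1.1 h with h' | h'
          · exact ZFSet.mem_asymm h' (hn ▸ hmem1.2)
          · rw [h', ← hn] at hmem1
            exact ZFSet.mem_irrefl _ hmem1.2
        · exact h
        · exact absurd h hnotb
      · refine ⟨0, ?_⟩
        rcases ord_trichotomy (f 0) (hcord _ hf0) b (hcord b hb) with h | h | h
        · exact absurd ⟨f 0, hf0, h⟩ hseg
        · exact h
        · exact absurd h (hf0min b hb)
  refine ⟨f, fun n => hsub _ (hfmem n), fun α hα => ?_⟩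
  rcases hunb α hα with ⟨b, hb, hαb⟩
  rcases henum b hb with ⟨n, rfl⟩
  exact ⟨n, hαb⟩
/-! ### first-order transfer machinery -/

open FirstOrder

@[simp] theorem relMap_adj {K : Set ZFSet.{u}} (a b : K) :
    Language.Structure.RelMap (L := setLang) (M := K)
      (Language.graphRel.adj : setLang.Relations 2) ![a, b] ↔ (a : ZFSet) ∈ (b : ZFSet) :=
  Iff.rfl

/-- membership atom -/
def mem' {α : Type} {n : ℕ} (t u : setLang.Term (α ⊕ Fin n)) : setLang.BoundedFormula α n :=
  Language.Relations.boundedFormula₂ (Language.graphRel.adj : setLang.Relations 2) t u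

@[simp] theorem realize_mem' {K : Set ZFSet.{u}} {α : Type} {n : ℕ}
    (t u : setLang.Term (α ⊕ Fin n)) (v : α → K) (xs : Fin n → K) :
    (mem' t u).Realize v xs ↔
      (↑(Language.Term.realize (M := K) (Sum.elim v xs) t) : ZFSet) ∈
        (↑(Language.Term.realize (M := K) (Sum.elim v xs) u) : ZFSet) := by
  rw [mem']
  exact Language.BoundedFormula.realize_rel₂.trans (relMap_adj _ _)

/-- lift a term to a context with one more bound variable -/
def liftT {α : Type} {n : ℕ} (t : setLang.Term (α ⊕ Fin n)) : setLang.Term (α ⊕ Fin (n + 1)) :=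
  t.relabel (Sum.map id Fin.castSucc)

@[simp] theorem realize_liftT {K : Set ZFSet.{u}} {α : Type} {n : ℕ}
    (t : setLang.Term (α ⊕ Fin n)) (v : α → K) (xs : Fin n → K) (a : K) :
    Language.Term.realize (M := K) (Sum.elim v (Fin.snoc xs a)) (liftT t) =
      Language.Term.realize (M := K) (Sum.elim v xs) t := by
  rw [liftT, Language.Term.realize_relabel]
  congr 1
  funext i
  rcases i with i | i
  · rfl
  · simp [Fin.snoc_castSucc]

/-- the last bound variable -/
abbrev lastV {α : Type} {n : ℕ} : setLang.Term (α ⊕ Fin (n + 1)) :=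
  Language.Term.var (Sum.inr (Fin.last n))

/-- `u = {x}` -/
def sngF {α : Type} {n : ℕ} (u x : setLang.Term (α ⊕ Fin n)) : setLang.BoundedFormula α n :=
  Language.BoundedFormula.all
    ((mem' lastV (liftT u)).iff (Language.Term.bdEqual lastV (liftT x)))

/-- `u = {x, y}` -/
def dblF {α : Type} {n : ℕ} (u x y : setLang.Term (α ⊕ Fin n)) : setLang.BoundedFormula α n :=
  Language.BoundedFormula.all
    ((mem' lastV (liftT u)).iff
      ((Language.Term.bdEqual lastV (liftT x)) ⊔ (Language.Term.bdEqual lastV (liftT y))))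

/-- `p = ZFSet.pair x y` (for transitive classes) -/
def isPairF {α : Type} {n : ℕ} (p x y : setLang.Term (α ⊕ Fin n)) : setLang.BoundedFormula α n :=
  (Language.BoundedFormula.all
    ((mem' lastV (liftT p)).imp
      ((sngF lastV (liftT x)) ⊔ (dblF lastV (liftT x) (liftT y))))) ⊓
  ((Language.BoundedFormula.ex ((mem' lastV (liftT p)) ⊓ (sngF lastV (liftT x)))) ⊓
   (Language.BoundedFormula.ex ((mem' lastV (liftT p)) ⊓ (dblF lastV (liftT x) (liftT y)))))

theorem realize_sngF {K : Set ZFSet.{u}} (hK : ZTrans K) {α : Type} {n : ℕ}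
    (u x : setLang.Term (α ⊕ Fin n)) (v : α → K) (xs : Fin n → K) :
    (sngF u x).Realize v xs ↔
      (↑(Language.Term.realize (M := K) (Sum.elim v xs) u) : ZFSet) =
        ({(↑(Language.Term.realize (M := K) (Sum.elim v xs) x) : ZFSet)} : ZFSet) := by
  set U : ZFSet := ↑(Language.Term.realize (M := K) (Sum.elim v xs) u) with hU
  set X : ZFSet := ↑(Language.Term.realize (M := K) (Sum.elim v xs) x) with hX
  have hUK : U ∈ K := (Language.Term.realize (M := K) (Sum.elim v xs) u).2
  simp only [sngF, Language.BoundedFormula.realize_all, Language.BoundedFormula.realize_iff,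
    realize_mem', Language.BoundedFormula.realize_bdEqual, Language.Term.realize_var,
    Sum.elim_inr, Fin.snoc_last, realize_liftT, Subtype.forall, Subtype.ext_iff, ← hU, ← hX]
  constructor
  · intro h
    apply ZFSet.ext
    intro z
    rw [ZFSet.mem_singleton]
    exact ⟨fun hz => (h z (hK _ hUK z hz)).1 hz,
      fun hz => (h z (hz ▸ (Language.Term.realize (M := K) (Sum.elim v xs) x).2)).2 hz⟩
  · intro h z _
    rw [h, ZFSet.mem_singleton]

theorem realize_dblF {K : Set ZFSet.{u}} (hK : ZTrans K) {α : Type} {n : ℕ}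
    (u x y : setLang.Term (α ⊕ Fin n)) (v : α → K) (xs : Fin n → K) :
    (dblF u x y).Realize v xs ↔
      (↑(Language.Term.realize (M := K) (Sum.elim v xs) u) : ZFSet) =
        ({(↑(Language.Term.realize (M := K) (Sum.elim v xs) x) : ZFSet),
          (↑(Language.Term.realize (M := K) (Sum.elim v xs) y) : ZFSet)} : ZFSet) := by
  set U : ZFSet := ↑(Language.Term.realize (M := K) (Sum.elim v xs) u) with hU
  set X : ZFSet := ↑(Language.Term.realize (M := K) (Sum.elim v xs) x) with hX
  set Y : ZFSet := ↑(Language.Term.realize (M := K) (Sum.elim v xs) y) with hY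
  have hUK : U ∈ K := (Language.Term.realize (M := K) (Sum.elim v xs) u).2
  simp only [dblF, Language.BoundedFormula.realize_all, Language.BoundedFormula.realize_iff,
    realize_mem', Language.BoundedFormula.realize_bdEqual, Language.BoundedFormula.realize_sup,
    Language.Term.realize_var, Sum.elim_inr, Fin.snoc_last, realize_liftT, Subtype.forall,
    Subtype.ext_iff, ← hU, ← hX, ← hY]
  constructor
  · intro h
    apply ZFSet.ext
    intro z
    rw [ZFSet.mem_insert_iff, ZFSet.mem_singleton]
    constructor
    · exact fun hz => (h z (hK _ hUK z hz)).1 hz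
    · rintro (hz | hz)
      · exact (h z (hz ▸ (Language.Term.realize (M := K) (Sum.elim v xs) x).2)).2 (Or.inl hz)
      · exact (h z (hz ▸ (Language.Term.realize (M := K) (Sum.elim v xs) y).2)).2 (Or.inr hz)
  · intro h z _
    rw [h, ZFSet.mem_insert_iff, ZFSet.mem_singleton]

theorem realize_isPairF {K : Set ZFSet.{u}} (hK : ZTrans K) {α : Type} {n : ℕ}
    (p x y : setLang.Term (α ⊕ Fin n)) (v : α → K) (xs : Fin n → K) :
    (isPairF p x y).Realize v xs ↔
      (↑(Language.Term.realize (M := K) (Sum.elim v xs) p) : ZFSet) =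
        ZFSet.pair (↑(Language.Term.realize (M := K) (Sum.elim v xs) x) : ZFSet)
          (↑(Language.Term.realize (M := K) (Sum.elim v xs) y) : ZFSet) := by
  set P : ZFSet := ↑(Language.Term.realize (M := K) (Sum.elim v xs) p) with hP
  set X : ZFSet := ↑(Language.Term.realize (M := K) (Sum.elim v xs) x) with hX
  set Y : ZFSet := ↑(Language.Term.realize (M := K) (Sum.elim v xs) y) with hY
  have hPK : P ∈ K := (Language.Term.realize (M := K) (Sum.elim v xs) p).2
  simp only [isPairF, Language.BoundedFormula.realize_inf, Language.BoundedFormula.realize_all,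
    Language.BoundedFormula.realize_imp, Language.BoundedFormula.realize_sup,
    Language.BoundedFormula.realize_ex, realize_mem', Language.Term.realize_var, Sum.elim_inr,
    Fin.snoc_last, realize_liftT, Subtype.forall, Subtype.exists,
    realize_sngF hK, realize_dblF hK, ← hP, ← hX, ← hY]
  constructor
  · rintro ⟨h1, ⟨s, hsK, hsP, hs⟩, ⟨d, hdK, hdP, hd⟩⟩
    apply ZFSet.ext
    intro z
    rw [ZFSet.pair, ZFSet.mem_insert_iff, ZFSet.mem_singleton]
    constructor
    · intro hz
      rcases h1 z (hK _ hPK z hz) hz with h | h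
      · exact Or.inl h
      · exact Or.inr h
    · rintro (hz | hz)
      · rw [hz, ← hs]; exact hsP
      · rw [hz, ← hd]; exact hdP
  · intro h
    refine ⟨?_, ?_, ?_⟩
    · intro z hzK hz
      rw [h, ZFSet.pair, ZFSet.mem_insert_iff, ZFSet.mem_singleton] at hz
      exact hz
    · have hmem : ({X} : ZFSet) ∈ P := by
        rw [h, ZFSet.pair]; exact ZFSet.mem_insert _ _
      exact ⟨{X}, hK _ hPK _ hmem, hmem, rfl⟩
    · have hmem : ({X, Y} : ZFSet) ∈ P := by
        rw [h, ZFSet.pair]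
        exact ZFSet.mem_insert_iff.2 (Or.inr (ZFSet.mem_singleton.2 rfl))
      exact ⟨{X, Y}, hK _ hPK _ hmem, hmem, rfl⟩
/-! ### the transfer principle -/

theorem vclass_trans : ZTrans Vclass := fun _ _ y _ => Set.mem_univ y

/-- free variable as a term -/
abbrev fvT {k n : ℕ} (i : Fin k) : setLang.Term (Fin k ⊕ Fin n) :=
  Language.Term.var (Sum.inl i)

def vK {k : ℕ} (v : Fin k → ZFSet.{u}) : Fin k → (Vclass : Set ZFSet.{u}) :=
  fun i => ⟨v i, Set.mem_univ _⟩

@[simp] theorem coe_vK {k : ℕ} (v : Fin k → ZFSet.{u}) (i : Fin k) :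
    ((vK v i : (Vclass : Set ZFSet.{u})) : ZFSet) = v i := rfl

section emb
variable {M : Set ZFSet.{u}} (j : Emb Vclass M)

def jK {k : ℕ} (v : Fin k → ZFSet.{u}) : Fin k → M :=
  fun i => ⟨jv0 j (v i), (j ⟨v i, Set.mem_univ _⟩).2⟩

@[simp] theorem coe_jK {k : ℕ} (v : Fin k → ZFSet.{u}) (i : Fin k) :
    ((jK j v i : M) : ZFSet) = jv0 j (v i) := rfl

theorem transfer {k : ℕ} (φ : setLang.Formula (Fin k)) (v : Fin k → ZFSet.{u}) :
    φ.Realize (jK j v) ↔ φ.Realize (vK v) := by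
  have h := j.map_formula φ (vK v)
  have he : (⇑j ∘ vK v) = jK j v := by
    funext i
    apply Subtype.ext
    rfl
  rwa [he] at h

theorem jv0_mem_M (x : ZFSet.{u}) : jv0 j x ∈ M := (j ⟨x, Set.mem_univ _⟩).2

/-- membership preservation -/
theorem jmem {x y : ZFSet.{u}} : x ∈ y ↔ jv0 j x ∈ jv0 j y := by
  have h := transfer j (mem' (fvT 0) (fvT 1) : setLang.BoundedFormula (Fin 2) 0) ![x, y]
  simp only [Language.Formula.Realize, realize_mem', Language.Term.realize_var, Sum.elim_inl] at h
  exact h.symm.trans Iff.rfl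

theorem jinj {x y : ZFSet.{u}} (h : jv0 j x = jv0 j y) : x = y := by
  have := j.injective (Subtype.ext h : (j ⟨x, Set.mem_univ _⟩) = j ⟨y, Set.mem_univ _⟩)
  exact congrArg Subtype.val this

theorem jpair (hM : ZTrans M) (x y : ZFSet.{u}) :
    jv0 j (ZFSet.pair x y) = ZFSet.pair (jv0 j x) (jv0 j y) := by
  have h := (transfer j (isPairF (fvT 0) (fvT 1) (fvT 2) : setLang.BoundedFormula (Fin 3) 0)
    ![ZFSet.pair x y, x, y]).2
  rw [Language.Formula.Realize, realize_isPairF vclass_trans] at h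
  rw [Language.Formula.Realize, realize_isPairF hM] at h
  simp only [Language.Term.realize_var, Sum.elim_inl, coe_jK, coe_vK, Matrix.cons_val_zero,
    Matrix.cons_val_one, Matrix.head_cons, Matrix.cons_val_two, Matrix.tail_cons] at h
  exact h trivial

end emb
/-! ### more formula blocks -/

section blocks
variable {K : Set ZFSet.{u}} {α : Type} {n : ℕ}

/-- `c ⊆ ξ` -/
def subB (c ξ : setLang.Term (α ⊕ Fin n)) : setLang.BoundedFormula α n :=
  Language.BoundedFormula.all ((mem' lastV (liftT c)).imp (mem' lastV (liftT ξ)))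

theorem realize_subB (hK : ZTrans K) (c ξ : setLang.Term (α ⊕ Fin n)) (v : α → K) (xs : Fin n → K) :
    (subB c ξ).Realize v xs ↔
      ∀ d : ZFSet, d ∈ (↑(Language.Term.realize (M := K) (Sum.elim v xs) c) : ZFSet) →
        d ∈ (↑(Language.Term.realize (M := K) (Sum.elim v xs) ξ) : ZFSet) := by
  simp only [subB, Language.BoundedFormula.realize_all, Language.BoundedFormula.realize_imp,
    realize_mem', Language.Term.realize_var, Sum.elim_inr, Fin.snoc_last, realize_liftT,
    Subtype.forall]
  exact ⟨fun h d hd => h d (hK _ (Language.Term.realize (M := K) (Sum.elim v xs) c).2 d hd) hd,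
    fun h d _ hd => h d hd⟩

/-- `c` is unbounded in `ξ` : `∀ α ∈ ξ, ∃ b ∈ c, α ∈ b` -/
def unbB (c ξ : setLang.Term (α ⊕ Fin n)) : setLang.BoundedFormula α n :=
  Language.BoundedFormula.all ((mem' lastV (liftT ξ)).imp
    (Language.BoundedFormula.ex ((mem' lastV (liftT (liftT c))) ⊓ (mem' (liftT lastV) lastV))))

theorem realize_unbB (hK : ZTrans K) (c ξ : setLang.Term (α ⊕ Fin n)) (v : α → K) (xs : Fin n → K) :
    (unbB c ξ).Realize v xs ↔
      ∀ a : ZFSet, a ∈ (↑(Language.Term.realize (M := K) (Sum.elim v xs) ξ) : ZFSet) →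
        ∃ b : ZFSet, b ∈ (↑(Language.Term.realize (M := K) (Sum.elim v xs) c) : ZFSet) ∧ a ∈ b := by
  simp only [unbB, Language.BoundedFormula.realize_all, Language.BoundedFormula.realize_imp,
    Language.BoundedFormula.realize_ex, Language.BoundedFormula.realize_inf,
    realize_mem', Language.Term.realize_var, Sum.elim_inr, Fin.snoc_last, realize_liftT,
    Subtype.forall, Subtype.exists]
  constructor
  · intro h a ha
    rcases h a (hK _ (Language.Term.realize (M := K) (Sum.elim v xs) ξ).2 a ha) ha with
      ⟨b, hbK, hbc, hab⟩
    exact ⟨b, hbc, hab⟩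
  · intro h a haK ha
    rcases h a ha with ⟨b, hbc, hab⟩
    exact ⟨b, hK _ (Language.Term.realize (M := K) (Sum.elim v xs) c).2 b hbc, hbc, hab⟩

/-- `MaxSeg c` -/
def maxsegB (c : setLang.Term (α ⊕ Fin n)) : setLang.BoundedFormula α n :=
  Language.BoundedFormula.all ((mem' lastV (liftT c)).imp
    ((Language.BoundedFormula.ex ((mem' lastV (liftT (liftT c))) ⊓ (mem' lastV (liftT lastV)))).imp
      (Language.BoundedFormula.ex ((mem' lastV (liftT (liftT c))) ⊓ ((mem' lastV (liftT lastV)) ⊓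
        (Language.BoundedFormula.all (((mem' lastV (liftT (liftT (liftT c)))) ⊓
            (mem' lastV (liftT (liftT lastV)))).imp
          ((mem' lastV (liftT lastV)) ⊔ (Language.Term.bdEqual lastV (liftT lastV))))))))))

theorem realize_maxsegB (hK : ZTrans K) (c : setLang.Term (α ⊕ Fin n)) (v : α → K) (xs : Fin n → K) :
    (maxsegB c).Realize v xs ↔ MaxSeg (↑(Language.Term.realize (M := K) (Sum.elim v xs) c) : ZFSet) := by
  set C : ZFSet := ↑(Language.Term.realize (M := K) (Sum.elim v xs) c) with hC
  have hCK : C ∈ K := (Language.Term.realize (M := K) (Sum.elim v xs) c).2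
  simp only [maxsegB, Language.BoundedFormula.realize_all, Language.BoundedFormula.realize_imp,
    Language.BoundedFormula.realize_ex, Language.BoundedFormula.realize_inf,
    Language.BoundedFormula.realize_sup, Language.BoundedFormula.realize_bdEqual,
    realize_mem', Language.Term.realize_var, Sum.elim_inr, Fin.snoc_last, realize_liftT,
    Subtype.forall, Subtype.exists, Subtype.ext_iff, ← hC]
  constructor
  · intro h b hbc hseg
    rcases hseg with ⟨d, hdc, hdb⟩
    rcases h b (hK _ hCK b hbc) hbc ⟨d, hK _ hCK d hdc, hdc, hdb⟩ with ⟨m, hmK, hmc, hmb, hmax⟩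
    exact ⟨m, hmc, hmb, fun e hec heb => hmax e (hK _ hCK e hec) ⟨hec, heb⟩⟩
  · intro h b hbK hbc hseg
    rcases hseg with ⟨d, hdK, hdc, hdb⟩
    rcases h b hbc ⟨d, hdc, hdb⟩ with ⟨m, hmc, hmb, hmax⟩
    exact ⟨m, hK _ hCK m hmc, hmc, hmb, fun e heK hecb => hmax e hecb.1 hecb.2⟩

/-- `t ≠ ∅` (there is a member) -/
def nonemB (t : setLang.Term (α ⊕ Fin n)) : setLang.BoundedFormula α n :=
  Language.BoundedFormula.ex (mem' lastV (liftT t))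

theorem realize_nonemB (hK : ZTrans K) (t : setLang.Term (α ⊕ Fin n)) (v : α → K) (xs : Fin n → K) :
    (nonemB t).Realize v xs ↔
      ∃ w : ZFSet, w ∈ (↑(Language.Term.realize (M := K) (Sum.elim v xs) t) : ZFSet) := by
  simp only [nonemB, Language.BoundedFormula.realize_ex, realize_mem', Language.Term.realize_var,
    Sum.elim_inr, Fin.snoc_last, realize_liftT, Subtype.exists]
  exact ⟨fun ⟨w, _, hw⟩ => ⟨w, hw⟩,
    fun ⟨w, hw⟩ => ⟨w, hK _ (Language.Term.realize (M := K) (Sum.elim v xs) t).2 w hw, hw⟩⟩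

/-- `∃ c, OmegaSeq ξ c` (with the witness in the class) -/
def cfωB (ξ : setLang.Term (α ⊕ Fin n)) : setLang.BoundedFormula α n :=
  Language.BoundedFormula.ex
    ((subB lastV (liftT ξ)) ⊓ ((unbB lastV (liftT ξ)) ⊓ (maxsegB lastV)))

theorem realize_cfωB (hK : ZTrans K) (ξ : setLang.Term (α ⊕ Fin n)) (v : α → K) (xs : Fin n → K) :
    (cfωB ξ).Realize v xs ↔
      ∃ c : ZFSet, c ∈ K ∧ OmegaSeq (↑(Language.Term.realize (M := K) (Sum.elim v xs) ξ) : ZFSet) c := by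
  simp only [cfωB, Language.BoundedFormula.realize_ex, Language.BoundedFormula.realize_inf,
    realize_subB hK, realize_unbB hK, realize_maxsegB hK, Language.Term.realize_var,
    Sum.elim_inr, Fin.snoc_last, realize_liftT, Subtype.exists]
  constructor
  · rintro ⟨c, hcK, h1, h2, h3⟩
    exact ⟨c, hcK, fun d hd => h1 d hd, fun a ha => h2 a ha, h3⟩
  · rintro ⟨c, hcK, h1, h2, h3⟩
    exact ⟨c, hcK, fun d hd => h1 d hd, fun a ha => h2 a ha, h3⟩

/-- `h` is a limit point of `a`: `∀ ρ ∈ h, ∃ x, x ∈ a ∧ x ∈ h ∧ ρ ∈ x` -/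
def limptB (h a : setLang.Term (α ⊕ Fin n)) : setLang.BoundedFormula α n :=
  Language.BoundedFormula.all ((mem' lastV (liftT h)).imp
    (Language.BoundedFormula.ex ((mem' lastV (liftT (liftT a))) ⊓
      ((mem' lastV (liftT (liftT h))) ⊓ (mem' (liftT lastV) lastV)))))

theorem realize_limptB (hK : ZTrans K) (h a : setLang.Term (α ⊕ Fin n)) (v : α → K) (xs : Fin n → K) :
    (limptB h a).Realize v xs ↔
      ∀ ρ : ZFSet, ρ ∈ (↑(Language.Term.realize (M := K) (Sum.elim v xs) h) : ZFSet) →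
        ∃ x : ZFSet, x ∈ (↑(Language.Term.realize (M := K) (Sum.elim v xs) a) : ZFSet) ∧
          x ∈ (↑(Language.Term.realize (M := K) (Sum.elim v xs) h) : ZFSet) ∧ ρ ∈ x := by
  set H : ZFSet := ↑(Language.Term.realize (M := K) (Sum.elim v xs) h) with hH
  set A : ZFSet := ↑(Language.Term.realize (M := K) (Sum.elim v xs) a) with hA
  have hHK : H ∈ K := (Language.Term.realize (M := K) (Sum.elim v xs) h).2
  have hAK : A ∈ K := (Language.Term.realize (M := K) (Sum.elim v xs) a).2
  simp only [limptB, Language.BoundedFormula.realize_all, Language.BoundedFormula.realize_imp,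
    Language.BoundedFormula.realize_ex, Language.BoundedFormula.realize_inf,
    realize_mem', Language.Term.realize_var, Sum.elim_inr, Fin.snoc_last, realize_liftT,
    Subtype.forall, Subtype.exists, ← hH, ← hA]
  constructor
  · intro h' ρ hρ
    rcases h' ρ (hK _ hHK ρ hρ) hρ with ⟨x, hxK, hxa, hxh, hρx⟩
    exact ⟨x, hxa, hxh, hρx⟩
  · intro h' ρ hρK hρ
    rcases h' ρ hρ with ⟨x, hxa, hxh, hρx⟩
    exact ⟨x, hK _ hAK x hxa, hxa, hxh, hρx⟩

end blocks
/-! ### ordinal formula and small transfers -/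

/-- `x is an ordinal` (Δ₀) -/
def ordF : setLang.Formula (Fin 1) :=
  (Language.BoundedFormula.all ((mem' lastV (fvT 0)).imp
    (Language.BoundedFormula.all ((mem' lastV (liftT lastV)).imp (mem' lastV (fvT 0)))))) ⊓
  (Language.BoundedFormula.all (Language.BoundedFormula.all (Language.BoundedFormula.all
    ((mem' (liftT (liftT lastV)) (liftT lastV)).imp
      ((mem' (liftT lastV) lastV).imp
        ((mem' lastV (fvT 0)).imp (mem' (liftT (liftT lastV)) lastV)))))))

theorem realize_ordF {K : Set ZFSet.{u}} (hK : ZTrans K) (v : Fin 1 → K) :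
    ordF.Realize v ↔ ZFSet.IsOrdinal (↑(v 0) : ZFSet) := by
  have hvK : (↑(v 0) : ZFSet) ∈ K := (v 0).2
  simp only [ordF, Language.Formula.Realize, Language.BoundedFormula.realize_inf,
    Language.BoundedFormula.realize_all, Language.BoundedFormula.realize_imp,
    realize_mem', Language.Term.realize_var, Sum.elim_inr, Sum.elim_inl, Fin.snoc_last,
    realize_liftT, Subtype.forall]
  constructor
  · rintro ⟨h1, h2⟩
    constructor
    · intro y hy z hz
      exact h1 y (hK _ hvK y hy) hy z (hK _ (hK _ hvK y hy) z hz) hz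
    · intro y z w hyz hzw hwx
      have hwK : w ∈ K := hK _ hvK w hwx
      have hzK : z ∈ K := hK _ hwK z hzw
      have hyK : y ∈ K := hK _ hzK y hyz
      exact h2 y hyK z hzK w hwK hyz hzw hwx
  · rintro ⟨h1, h2⟩
    constructor
    · intro y _ hy z _ hz
      exact h1 y hy hz
    · intro y _ z _ w _ hyz hzw hwx
      exact h2 hyz hzw hwx

section emb2
variable {M : Set ZFSet.{u}} (j : Emb Vclass M)

theorem jord {x : ZFSet.{u}} (hM : ZTrans M) (h : x.IsOrdinal) : (jv0 j x).IsOrdinal := by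
  have t := (transfer j ordF ![x]).2 (by rw [realize_ordF vclass_trans]; exact h)
  rwa [realize_ordF hM] at t

theorem jsub (hM : ZTrans M) {c ξ : ZFSet.{u}} (h : ∀ d ∈ c, d ∈ ξ) :
    ∀ d ∈ jv0 j c, d ∈ jv0 j ξ := by
  have t := (transfer j (subB (fvT 0) (fvT 1) : setLang.BoundedFormula (Fin 2) 0) ![c, ξ]).2
  rw [Language.Formula.Realize, realize_subB vclass_trans] at t
  rw [Language.Formula.Realize, realize_subB hM] at t
  simp only [Language.Term.realize_var, Sum.elim_inl, coe_jK, coe_vK, Matrix.cons_val_zero,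
    Matrix.cons_val_one, Matrix.head_cons] at t
  exact t h

theorem junb (hM : ZTrans M) {c ξ : ZFSet.{u}} (h : ∀ a ∈ ξ, ∃ b ∈ c, a ∈ b) :
    ∀ a ∈ jv0 j ξ, ∃ b ∈ jv0 j c, a ∈ b := by
  have t := (transfer j (unbB (fvT 0) (fvT 1) : setLang.BoundedFormula (Fin 2) 0) ![c, ξ]).2
  rw [Language.Formula.Realize, realize_unbB vclass_trans] at t
  rw [Language.Formula.Realize, realize_unbB hM] at t
  simp only [Language.Term.realize_var, Sum.elim_inl, coe_jK, coe_vK, Matrix.cons_val_zero,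
    Matrix.cons_val_one, Matrix.head_cons] at t
  intro a ha
  rcases t (fun a ha => h a ha) a ha with ⟨b, hb, hab⟩
  exact ⟨b, hb, hab⟩

theorem jmaxseg (hM : ZTrans M) {c : ZFSet.{u}} (h : MaxSeg c) : MaxSeg (jv0 j c) := by
  have t := (transfer j (maxsegB (fvT 0) : setLang.BoundedFormula (Fin 1) 0) ![c]).2
  rw [Language.Formula.Realize, realize_maxsegB vclass_trans] at t
  rw [Language.Formula.Realize, realize_maxsegB hM] at t
  simp only [Language.Term.realize_var, Sum.elim_inl, coe_jK, coe_vK, Matrix.cons_val_zero] at t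
  exact t h

/-- minimality of an element transfers -/
def minF : setLang.Formula (Fin 2) :=
  (mem' (fvT 0) (fvT 1)) ⊓
    (Language.BoundedFormula.all ((mem' lastV (fvT 1)).imp (Language.BoundedFormula.not (mem' lastV (fvT 0)))))

theorem jmin (hM : ZTrans M) {mn c : ZFSet.{u}} (h1 : mn ∈ c) (h2 : ∀ d ∈ c, d ∉ mn) :
    jv0 j mn ∈ jv0 j c ∧ ∀ d ∈ jv0 j c, d ∉ jv0 j mn := by
  have t := (transfer j minF ![mn, c]).2
  simp only [minF, Language.Formula.Realize, Language.BoundedFormula.realize_inf,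
    Language.BoundedFormula.realize_all, Language.BoundedFormula.realize_imp,
    Language.BoundedFormula.realize_not, realize_mem', Language.Term.realize_var,
    Sum.elim_inr, Sum.elim_inl, Fin.snoc_last, Subtype.forall, coe_jK, coe_vK,
    Matrix.cons_val_zero, Matrix.cons_val_one, Matrix.head_cons] at t
  rcases t ⟨h1, fun d _ hd => h2 d hd⟩ with ⟨t1, t2⟩
  exact ⟨t1, fun d hd => t2 d (hM _ (jv0_mem_M j c) d hd) hd⟩

/-- successor-in-c transfers -/
def succF : setLang.Formula (Fin 3) :=
  ((mem' (fvT 1) (fvT 2)) ⊓ (mem' (fvT 0) (fvT 1))) ⊓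
    (Language.BoundedFormula.all (((mem' lastV (fvT 2)) ⊓ (mem' (fvT 0) lastV)).imp
      (Language.BoundedFormula.not (mem' lastV (fvT 1)))))

theorem jsucc (hM : ZTrans M) {e e' c : ZFSet.{u}} (h1 : e' ∈ c) (h2 : e ∈ e')
    (h3 : ∀ d ∈ c, e ∈ d → d ∉ e') :
    jv0 j e' ∈ jv0 j c ∧ jv0 j e ∈ jv0 j e' ∧
      ∀ d ∈ jv0 j c, jv0 j e ∈ d → d ∉ jv0 j e' := by
  have t := (transfer j succF ![e, e', c]).2
  simp only [succF, Language.Formula.Realize, Language.BoundedFormula.realize_inf,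
    Language.BoundedFormula.realize_all, Language.BoundedFormula.realize_imp,
    Language.BoundedFormula.realize_not, realize_mem', Language.Term.realize_var,
    Sum.elim_inr, Sum.elim_inl, Fin.snoc_last, Subtype.forall, coe_jK, coe_vK,
    Matrix.cons_val_zero, Matrix.cons_val_one, Matrix.head_cons, Matrix.cons_val_two,
    Matrix.tail_cons] at t
  rcases t ⟨⟨h1, h2⟩, fun d _ hd => h3 d hd.1 hd.2⟩ with ⟨⟨t1, t2⟩, t3⟩
  exact ⟨t1, t2, fun d hd hed => t3 d (hM _ (jv0_mem_M j c) d hd) ⟨hd, hed⟩⟩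

/-- existence of an element of `c` above `e` transfers downwards -/
def exAboveF : setLang.Formula (Fin 2) :=
  Language.BoundedFormula.ex ((mem' lastV (fvT 1)) ⊓ (mem' (fvT 0) lastV))

theorem jexAbove (hM : ZTrans M) {e c : ZFSet.{u}}
    (h : ∃ d, d ∈ jv0 j c ∧ jv0 j e ∈ d) : ∃ d ∈ c, e ∈ d := by
  have t := (transfer j exAboveF ![e, c]).1
  simp only [exAboveF, Language.Formula.Realize, Language.BoundedFormula.realize_ex,
    Language.BoundedFormula.realize_inf, realize_mem', Language.Term.realize_var,
    Sum.elim_inr, Sum.elim_inl, Fin.snoc_last, Subtype.exists, coe_jK, coe_vK,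
    Matrix.cons_val_zero, Matrix.cons_val_one, Matrix.head_cons] at t
  rcases h with ⟨d, hd, hed⟩
  rcases t ⟨d, hM _ (jv0_mem_M j c) d hd, hd, hed⟩ with ⟨d', _, hd', hed'⟩
  exact ⟨d', hd', hed'⟩

end emb2
/-! ### continuity of j at cofinality-ω ordinals -/

section emb3
variable {M : Set ZFSet.{u}} (j : Emb Vclass M)

theorem jnonem (hM : ZTrans M) {c : ZFSet.{u}} (h : ∃ w, w ∈ jv0 j c) : ∃ w, w ∈ c := by
  have t := (transfer j (nonemB (fvT 0) : setLang.BoundedFormula (Fin 1) 0) ![c]).1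
  rw [Language.Formula.Realize, realize_nonemB hM] at t
  rw [Language.Formula.Realize, realize_nonemB vclass_trans] at t
  simp only [Language.Term.realize_var, Sum.elim_inl, coe_jK, coe_vK, Matrix.cons_val_zero] at t
  exact t h

theorem jimage_of_omegaSeq (hM : ZTrans M) {c ξ : ZFSet.{u}} (hξ : ξ.IsOrdinal)
    (hc : OmegaSeq ξ c) : ∀ b ∈ jv0 j c, ∃ e ∈ c, b = jv0 j e := by
  obtain ⟨hsub, hunb, hms⟩ := hc
  have hcord : ∀ d ∈ c, ZFSet.IsOrdinal d := fun d hd => isOrdinal_of_mem hξ (hsub d hd)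
  have hjξord : (jv0 j ξ).IsOrdinal := jord j hM hξ
  have hjsub := jsub j hM hsub
  have hjord : ∀ b ∈ jv0 j c, ZFSet.IsOrdinal b := fun b hb =>
    isOrdinal_of_mem hjξord (hjsub b hb)
  have hjms := jmaxseg j hM hms
  intro b
  induction b using ZFSet.inductionOn with
  | _ b IH =>
    intro hb
    by_cases hseg : ∃ d ∈ jv0 j c, d ∈ b
    · obtain ⟨m, hmc, hmb, hmax⟩ := hjms b hb hseg
      obtain ⟨e, hec, rfl⟩ := IH m hmb hmc
      have hex : ∃ d ∈ c, e ∈ d := jexAbove j hM ⟨b, hb, hmb⟩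
      have hne : ({d : ZFSet.{u} | d ∈ c ∧ e ∈ d}).Nonempty := by
        rcases hex with ⟨d, hd, hed⟩; exact ⟨d, hd, hed⟩
      set e' := ZFSet.mem_wf.min {d : ZFSet.{u} | d ∈ c ∧ e ∈ d} hne with he'
      have hmm := ZFSet.mem_wf.min_mem {d : ZFSet.{u} | d ∈ c ∧ e ∈ d} hne
      have hmin : ∀ d ∈ c, e ∈ d → d ∉ e' := fun d hd hed =>
        ZFSet.mem_wf.not_lt_min {d : ZFSet.{u} | d ∈ c ∧ e ∈ d} ⟨hd, hed⟩
      obtain ⟨t1, t2, t3⟩ := jsucc j hM hmm.1 hmm.2 hmin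
      rcases ord_trichotomy b (hjord b hb) (jv0 j e') (hjord _ t1) with h | h | h
      · exact absurd h (t3 b hb hmb)
      · exact ⟨e', hmm.1, h⟩
      · exfalso
        rcases hmax (jv0 j e') t1 h with h' | h'
        · exact ZFSet.mem_asymm h' t2
        · rw [h'] at t2; exact ZFSet.mem_irrefl _ t2
    · obtain ⟨w, hw⟩ := jnonem j hM ⟨b, hb⟩
      have hne : ({d : ZFSet.{u} | d ∈ c}).Nonempty := ⟨w, hw⟩
      set mn := ZFSet.mem_wf.min {d : ZFSet.{u} | d ∈ c} hne with hmn
      have hmm := ZFSet.mem_wf.min_mem {d : ZFSet.{u} | d ∈ c} hne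
      have hminp : ∀ d ∈ c, d ∉ mn := fun d hd =>
        ZFSet.mem_wf.not_lt_min {d : ZFSet.{u} | d ∈ c} hd
      obtain ⟨t1, t2⟩ := jmin j hM hmm hminp
      rcases ord_trichotomy b (hjord b hb) (jv0 j mn) (hjord _ t1) with h | h | h
      · exact absurd h (t2 b hb)
      · exact ⟨mn, hmm, h⟩
      · exact absurd ⟨jv0 j mn, t1, h⟩ hseg

theorem jcont (hM : ZTrans M) {ξ : ZFSet.{u}} (hξ : ξ.IsOrdinal) (hcof : zCofOmega ξ) :
    ∀ η ∈ jv0 j ξ, ∃ β ∈ ξ, η ∈ jv0 j β := by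
  obtain ⟨c, hc⟩ := omegaSeq_of_cofOmega hξ hcof
  intro η hη
  rcases junb j hM hc.2.1 η hη with ⟨b, hbc, hηb⟩
  rcases jimage_of_omegaSeq j hM hξ hc b hbc with ⟨e, hec, rfl⟩
  exact ⟨e, hc.1 e hec, hηb⟩

end emb3
/-! ### transfers about the partition function -/

section emb4
variable {M : Set ZFSet.{u}} (j : Emb Vclass M)

theorem mem_M_of_pair {x y : ZFSet.{u}} (hM : ZTrans M) (hp : ZFSet.pair x y ∈ M) :
    x ∈ M ∧ y ∈ M := by
  have h1 : ({x} : ZFSet) ∈ M := hM _ hp _ (ZFSet.mem_insert _ _)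
  have h2 : ({x, y} : ZFSet) ∈ M :=
    hM _ hp _ (ZFSet.mem_insert_iff.2 (Or.inr (ZFSet.mem_singleton.2 rfl)))
  exact ⟨hM _ h1 _ (ZFSet.mem_insert _ _),
    hM _ h2 _ (ZFSet.mem_insert_iff.2 (Or.inr (ZFSet.mem_singleton.2 rfl)))⟩

/-- totality : `∀ x ∈ λ, ∃ p y, p ∈ S ∧ p = ⟨x, y⟩` -/
def funTotF : setLang.Formula (Fin 2) :=
  Language.BoundedFormula.all ((mem' lastV (fvT 1)).imp
    (Language.BoundedFormula.ex (Language.BoundedFormula.ex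
      ((mem' (liftT lastV) (fvT 0)) ⊓
        isPairF (liftT lastV) (liftT (liftT lastV)) lastV))))

theorem jS_total (hM : ZTrans M) {S lam : ZFSet.{u}}
    (hv : ∀ x ∈ lam, ∃ y : ZFSet.{u}, ZFSet.pair x y ∈ S) :
    ∀ x, x ∈ M → x ∈ jv0 j lam → ∃ y : ZFSet.{u}, y ∈ M ∧ ZFSet.pair x y ∈ jv0 j S := by
  have t := (transfer j funTotF ![S, lam]).2
  simp only [funTotF, Language.Formula.Realize, Language.BoundedFormula.realize_all,
    Language.BoundedFormula.realize_imp, Language.BoundedFormula.realize_ex,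
    Language.BoundedFormula.realize_inf, realize_mem', realize_isPairF vclass_trans,
    Language.Term.realize_var, Sum.elim_inr, Sum.elim_inl, Fin.snoc_last, realize_liftT,
    Subtype.forall, Subtype.exists, coe_vK, Matrix.cons_val_zero, Matrix.cons_val_one,
    Matrix.head_cons] at t
  simp only [Language.BoundedFormula.realize_all, Language.BoundedFormula.realize_imp,
    Language.BoundedFormula.realize_ex, Language.BoundedFormula.realize_inf, realize_mem',
    realize_isPairF hM, Language.Term.realize_var, Sum.elim_inr, Sum.elim_inl, Fin.snoc_last,
    realize_liftT, Subtype.forall, Subtype.exists, coe_jK, Matrix.cons_val_zero,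
    Matrix.cons_val_one, Matrix.head_cons] at t
  have tv : ∀ (x : ZFSet), x ∈ Vclass → x ∈ lam →
      ∃ p, ∃ _ : p ∈ Vclass, ∃ y, ∃ _ : y ∈ Vclass, p ∈ S ∧ p = ZFSet.pair x y := by
    intro x _ hx
    rcases hv x hx with ⟨y, hy⟩
    exact ⟨ZFSet.pair x y, Set.mem_univ _, y, Set.mem_univ _, hy, rfl⟩
  intro x hxM hx
  rcases t tv x hxM hx with ⟨p, hpM, y, hyM, hpS, hpe⟩
  exact ⟨y, hyM, hpe ▸ hpS⟩

/-- functionality -/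
def funUniqF : setLang.Formula (Fin 1) :=
  Language.BoundedFormula.all (Language.BoundedFormula.all (Language.BoundedFormula.all
    (Language.BoundedFormula.all (Language.BoundedFormula.all
      ((((mem' (liftT lastV) (fvT 0)) ⊓ (mem' lastV (fvT 0))) ⊓
        ((isPairF (liftT lastV) (liftT (liftT (liftT (liftT lastV))))
            (liftT (liftT (liftT lastV)))) ⊓
         (isPairF lastV (liftT (liftT (liftT (liftT lastV))))
            (liftT (liftT lastV))))).imp
        (Language.Term.bdEqual (liftT (liftT (liftT lastV))) (liftT (liftT lastV)))))))) 

theorem jS_uniq (hM : ZTrans M) {S : ZFSet.{u}}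
    (hv : ∀ x y y' : ZFSet.{u}, ZFSet.pair x y ∈ S → ZFSet.pair x y' ∈ S → y = y') :
    ∀ x y y' : ZFSet.{u}, ZFSet.pair x y ∈ jv0 j S → ZFSet.pair x y' ∈ jv0 j S → y = y' := by
  have t := (transfer j funUniqF ![S]).2
  simp only [funUniqF, Language.Formula.Realize, Language.BoundedFormula.realize_all,
    Language.BoundedFormula.realize_imp, Language.BoundedFormula.realize_inf, realize_mem',
    realize_isPairF vclass_trans, Language.BoundedFormula.realize_bdEqual,
    Language.Term.realize_var, Sum.elim_inr, Sum.elim_inl, Fin.snoc_last, realize_liftT,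
    Subtype.forall, Subtype.ext_iff, coe_vK, Matrix.cons_val_zero] at t
  simp only [Language.BoundedFormula.realize_all, Language.BoundedFormula.realize_imp,
    Language.BoundedFormula.realize_inf, realize_mem', realize_isPairF hM,
    Language.BoundedFormula.realize_bdEqual, Language.Term.realize_var, Sum.elim_inr,
    Sum.elim_inl, Fin.snoc_last, realize_liftT, Subtype.forall, Subtype.ext_iff, coe_jK,
    Matrix.cons_val_zero] at t
  have tv : ∀ (x : ZFSet), x ∈ Vclass → ∀ (y : ZFSet), y ∈ Vclass → ∀ (y' : ZFSet),
      y' ∈ Vclass → ∀ (p : ZFSet), p ∈ Vclass → ∀ (q : ZFSet), q ∈ Vclass →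
      (p ∈ S ∧ q ∈ S) ∧ p = ZFSet.pair x y ∧ q = ZFSet.pair x y' → y = y' := by
    rintro x _ y _ y' _ p _ q _ ⟨⟨hp, hq⟩, rfl, rfl⟩
    exact hv x y y' hp hq
  intro x y y' hp hq
  have hpM : ZFSet.pair x y ∈ M := hM _ (jv0_mem_M j S) _ hp
  have hqM : ZFSet.pair x y' ∈ M := hM _ (jv0_mem_M j S) _ hq
  obtain ⟨hxM, hyM⟩ := mem_M_of_pair hM hpM
  obtain ⟨-, hy'M⟩ := mem_M_of_pair hM hqM
  exact t tv x hxM y hyM y' hy'M _ hpM _ hqM ⟨⟨hp, hq⟩, rfl, rfl⟩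

/-- pieces consist of nonempty λ-ordinals of countable cofinality -/
def piecesF : setLang.Formula (Fin 2) :=
  Language.BoundedFormula.all (Language.BoundedFormula.all (Language.BoundedFormula.all
    (Language.BoundedFormula.all
      ((((mem' (liftT (liftT (liftT lastV))) (fvT 0)) ⊓
        (isPairF (liftT (liftT (liftT lastV))) (liftT (liftT lastV)) (liftT lastV))) ⊓
        (mem' lastV (liftT lastV))).imp
        (((mem' lastV (fvT 1)) ⊓ nonemB lastV) ⊓ cfωB lastV)))))

theorem jpieces (hM : ZTrans M) {S lam : ZFSet.{u}}
    (hv : ∀ p x y t : ZFSet.{u}, p ∈ S → p = ZFSet.pair x y → t ∈ y →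
      t ∈ lam ∧ (∃ w, w ∈ t) ∧ ∃ c, OmegaSeq t c) :
    ∀ x y t : ZFSet.{u}, ZFSet.pair x y ∈ jv0 j S → t ∈ y →
      t ∈ jv0 j lam ∧ (∃ w, w ∈ t) ∧ ∃ c, OmegaSeq t c := by
  have t0 := (transfer j piecesF ![S, lam]).2
  simp only [piecesF, Language.Formula.Realize, Language.BoundedFormula.realize_all,
    Language.BoundedFormula.realize_imp, Language.BoundedFormula.realize_inf, realize_mem',
    realize_isPairF vclass_trans, realize_nonemB vclass_trans, realize_cfωB vclass_trans,
    Language.Term.realize_var, Sum.elim_inr, Sum.elim_inl, Fin.snoc_last, realize_liftT,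
    Subtype.forall, coe_vK, Matrix.cons_val_zero, Matrix.cons_val_one, Matrix.head_cons] at t0
  simp only [Language.BoundedFormula.realize_all, Language.BoundedFormula.realize_imp,
    Language.BoundedFormula.realize_inf, realize_mem', realize_isPairF hM, realize_nonemB hM,
    realize_cfωB hM, Language.Term.realize_var, Sum.elim_inr, Sum.elim_inl, Fin.snoc_last,
    realize_liftT, Subtype.forall, coe_jK, Matrix.cons_val_zero, Matrix.cons_val_one,
    Matrix.head_cons] at t0
  have tv : ∀ (p : ZFSet), p ∈ Vclass → ∀ (x : ZFSet), x ∈ Vclass → ∀ (y : ZFSet),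
      y ∈ Vclass → ∀ (t : ZFSet), t ∈ Vclass →
      (p ∈ S ∧ p = ZFSet.pair x y) ∧ t ∈ y →
      (t ∈ lam ∧ ∃ w, w ∈ t) ∧ ∃ c, c ∈ Vclass ∧ OmegaSeq t c := by
    rintro p _ x _ y _ t _ ⟨⟨hp, rfl⟩, ht⟩
    rcases hv _ x y t hp rfl ht with ⟨h1, h2, c, h3⟩
    exact ⟨⟨h1, h2⟩, c, Set.mem_univ _, h3⟩
  intro x y t hp ht
  have hpM : ZFSet.pair x y ∈ M := hM _ (jv0_mem_M j S) _ hp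
  obtain ⟨hxM, hyM⟩ := mem_M_of_pair hM hpM
  have htM : t ∈ M := hM _ hyM _ ht
  rcases t0 tv _ hpM x hxM y hyM t htM ⟨⟨hp, rfl⟩, ht⟩ with ⟨⟨h1, h2⟩, c, _, h3⟩
  exact ⟨h1, h2, c, h3⟩

/-- disjointness of the pieces -/
def disjF : setLang.Formula (Fin 1) :=
  Language.BoundedFormula.all (Language.BoundedFormula.all (Language.BoundedFormula.all
    (Language.BoundedFormula.all (Language.BoundedFormula.all (Language.BoundedFormula.all
      (Language.BoundedFormula.all
        (((((mem' (liftT (liftT lastV)) (fvT 0)) ⊓ (mem' (liftT lastV) (fvT 0))) ⊓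
          ((isPairF (liftT (liftT lastV))
              (liftT (liftT (liftT (liftT (liftT (liftT lastV))))))
              (liftT (liftT (liftT (liftT lastV))))) ⊓
           (isPairF (liftT lastV)
              (liftT (liftT (liftT (liftT (liftT lastV)))))
              (liftT (liftT (liftT lastV)))))) ⊓
          ((Language.BoundedFormula.not (Language.Term.bdEqual
              (liftT (liftT (liftT (liftT (liftT (liftT lastV))))))
              (liftT (liftT (liftT (liftT (liftT lastV))))))) ⊓
           (mem' lastV (liftT (liftT (liftT (liftT lastV))))))).imp
          (Language.BoundedFormula.not (mem' lastV (liftT (liftT (liftT lastV))))))))))))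

theorem jdisj (hM : ZTrans M) {S : ZFSet.{u}}
    (hv : ∀ x x' y y' : ZFSet.{u}, ZFSet.pair x y ∈ S → ZFSet.pair x' y' ∈ S → x ≠ x' →
      ∀ t ∈ y, t ∉ y') :
    ∀ x x' y y' : ZFSet.{u}, ZFSet.pair x y ∈ jv0 j S → ZFSet.pair x' y' ∈ jv0 j S → x ≠ x' →
      ∀ t ∈ y, t ∉ y' := by
  have t0 := (transfer j disjF ![S]).2
  simp only [disjF, Language.Formula.Realize, Language.BoundedFormula.realize_all,
    Language.BoundedFormula.realize_imp, Language.BoundedFormula.realize_inf,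
    Language.BoundedFormula.realize_not, realize_mem', realize_isPairF vclass_trans,
    Language.BoundedFormula.realize_bdEqual, Language.Term.realize_var, Sum.elim_inr,
    Sum.elim_inl, Fin.snoc_last, realize_liftT, Subtype.forall, Subtype.ext_iff, coe_vK,
    Matrix.cons_val_zero] at t0
  simp only [Language.BoundedFormula.realize_all, Language.BoundedFormula.realize_imp,
    Language.BoundedFormula.realize_inf, Language.BoundedFormula.realize_not, realize_mem',
    realize_isPairF hM, Language.BoundedFormula.realize_bdEqual, Language.Term.realize_var,
    Sum.elim_inr, Sum.elim_inl, Fin.snoc_last, realize_liftT, Subtype.forall, Subtype.ext_iff,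
    coe_jK, Matrix.cons_val_zero] at t0
  have tv : ∀ (x : ZFSet), x ∈ Vclass → ∀ (x' : ZFSet), x' ∈ Vclass → ∀ (y : ZFSet),
      y ∈ Vclass → ∀ (y' : ZFSet), y' ∈ Vclass → ∀ (p : ZFSet), p ∈ Vclass → ∀ (q : ZFSet),
      q ∈ Vclass → ∀ (t : ZFSet), t ∈ Vclass →
      ((p ∈ S ∧ q ∈ S) ∧ (p = ZFSet.pair x y ∧ q = ZFSet.pair x' y')) ∧ ¬x = x' ∧ t ∈ y →
      ¬t ∈ y' := by
    rintro x _ x' _ y _ y' _ p _ q _ t _ ⟨⟨⟨hp, hq⟩, rfl, rfl⟩, hne, ht⟩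
    exact hv x x' y y' hp hq hne t ht
  intro x x' y y' hp hq hne t ht
  have hpM : ZFSet.pair x y ∈ M := hM _ (jv0_mem_M j S) _ hp
  have hqM : ZFSet.pair x' y' ∈ M := hM _ (jv0_mem_M j S) _ hq
  obtain ⟨hxM, hyM⟩ := mem_M_of_pair hM hpM
  obtain ⟨hx'M, hy'M⟩ := mem_M_of_pair hM hqM
  have htM : t ∈ M := hM _ hyM _ ht
  exact t0 tv x hxM x' hx'M y hyM y' hy'M _ hpM _ hqM t htM ⟨⟨⟨hp, hq⟩, rfl, rfl⟩, hne, ht⟩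

end emb4
/-! ### sentences providing sets inside M -/

section emb5
variable {M : Set ZFSet.{u}} (j : Emb Vclass.{u} M)
include j

def sUnionF : setLang.Formula (Fin 0) :=
  Language.BoundedFormula.all (Language.BoundedFormula.ex (Language.BoundedFormula.all
    ((mem' lastV (liftT lastV)).iff
      (Language.BoundedFormula.ex
        ((mem' lastV (liftT (liftT (liftT lastV)))) ⊓ (mem' (liftT lastV) lastV))))))

theorem M_sUnion (hM : ZTrans M) {a : ZFSet.{u}} (haM : a ∈ M) : (⋃₀ a : ZFSet) ∈ M := by
  have t := (transfer j sUnionF ![]).2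
  simp only [sUnionF, Language.Formula.Realize, Language.BoundedFormula.realize_all,
    Language.BoundedFormula.realize_ex, Language.BoundedFormula.realize_iff,
    Language.BoundedFormula.realize_inf, realize_mem', Language.Term.realize_var,
    Sum.elim_inr, Fin.snoc_last, realize_liftT, Subtype.forall, Subtype.exists] at t
  have tv : ∀ (a : ZFSet), a ∈ Vclass → ∃ u, ∃ _ : u ∈ Vclass, ∀ (z : ZFSet), z ∈ Vclass →
      (z ∈ u ↔ ∃ x, ∃ _ : x ∈ Vclass, x ∈ a ∧ z ∈ x) := by
    intro a _
    refine ⟨⋃₀ a, Set.mem_univ _, fun z _ => ?_⟩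
    rw [ZFSet.mem_sUnion]
    exact ⟨fun ⟨x, hx, hz⟩ => ⟨x, Set.mem_univ _, hx, hz⟩, fun ⟨x, _, hx, hz⟩ => ⟨x, hx, hz⟩⟩
  rcases t tv a haM with ⟨u, huM, hu⟩
  have : (⋃₀ a : ZFSet) = u := by
    apply ZFSet.ext
    intro z
    constructor
    · intro hz
      rcases ZFSet.mem_sUnion.1 hz with ⟨x, hx, hzx⟩
      have hxM : x ∈ M := hM _ haM _ hx
      exact (hu z (hM _ hxM _ hzx)).2 ⟨x, hxM, hx, hzx⟩
    · intro hz
      rcases (hu z (hM _ huM _ hz)).1 hz with ⟨x, _, hx, hzx⟩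
      exact ZFSet.mem_sUnion.2 ⟨x, hx, hzx⟩
  rwa [this]

def sepLimF : setLang.Formula (Fin 0) :=
  Language.BoundedFormula.all (Language.BoundedFormula.all (Language.BoundedFormula.ex
    (Language.BoundedFormula.all
      ((mem' lastV (liftT lastV)).iff
        ((mem' lastV (liftT (liftT lastV))) ⊓
          (limptB lastV (liftT (liftT (liftT lastV)))))))))

theorem M_sepLim (hM : ZTrans M) {a b : ZFSet.{u}} (haM : a ∈ M) (hbM : b ∈ M) :
    ∃ czf, czf ∈ M ∧ ∀ η : ZFSet.{u},
      (η ∈ czf ↔ η ∈ b ∧ ∀ ρ ∈ η, ∃ x, x ∈ a ∧ x ∈ η ∧ ρ ∈ x) := by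
  have t := (transfer j sepLimF ![]).2
  simp only [sepLimF, Language.Formula.Realize, Language.BoundedFormula.realize_all,
    Language.BoundedFormula.realize_ex, Language.BoundedFormula.realize_iff,
    Language.BoundedFormula.realize_inf, realize_mem', realize_limptB vclass_trans,
    Language.Term.realize_var, Sum.elim_inr, Fin.snoc_last, realize_liftT, Subtype.forall,
    Subtype.exists] at t
  simp only [Language.BoundedFormula.realize_all, Language.BoundedFormula.realize_ex,
    Language.BoundedFormula.realize_iff, Language.BoundedFormula.realize_inf, realize_mem',
    realize_limptB hM, Language.Term.realize_var, Sum.elim_inr, Fin.snoc_last, realize_liftT,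
    Subtype.forall, Subtype.exists] at t
  have tv : ∀ (a : ZFSet), a ∈ Vclass → ∀ (b : ZFSet), b ∈ Vclass →
      ∃ c, ∃ _ : c ∈ Vclass, ∀ (η : ZFSet), η ∈ Vclass →
        (η ∈ c ↔ η ∈ b ∧ ∀ ρ, ρ ∈ η → ∃ x, x ∈ a ∧ x ∈ η ∧ ρ ∈ x) := by
    intro a _ b _
    refine ⟨ZFSet.sep (fun η => ∀ ρ ∈ η, ∃ x, x ∈ a ∧ x ∈ η ∧ ρ ∈ x) b, Set.mem_univ _,
      fun η _ => ?_⟩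
    rw [ZFSet.mem_sep]
  rcases t tv a haM b hbM with ⟨c, hcM, hc⟩
  refine ⟨c, hcM, fun η => ?_⟩
  constructor
  · intro hη
    exact (hc η (hM _ hcM _ hη)).1 hη
  · rintro ⟨hηb, hlim⟩
    exact (hc η (hM _ hbM _ hηb)).2 ⟨hηb, hlim⟩

end emb5
/-! ### main theorem -/

theorem solovay_main (lam : ZFSet.{u}) (hreg : zRegular lam) (hunc : ZFSet.omega ∈ lam)
    (S : ZFSet.{u}) (hS : zFnOn S lam)
    (hparts : ∀ α ∈ lam, ∀ ξ ∈ zApp S α, ξ ∈ lam ∧ zCofOmega ξ)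
    (hdisj : ∀ α ∈ lam, ∀ β ∈ lam, α ≠ β → ∀ ξ : ZFSet.{u}, ξ ∈ zApp S α → ξ ∉ zApp S β)
    (hcover : ∀ ξ ∈ lam, zCofOmega ξ → ∃ α ∈ lam, ξ ∈ zApp S α)
    (hstat : ∀ α ∈ lam, zStationary (zApp S α) lam)
    (M : Set ZFSet.{u}) (hM : IsInnerModel M) (j : Emb Vclass M)
    (hjl : jImage j lam ∈ M) :
    jImage j lam =
      ZFSet.sep
        (fun α => zStationaryIn M (zApp (jv0 j S) α) (⋃₀ jImage j lam))
        (⋃₀ jImage j lam) := by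
  classical
  have hMt : ZTrans M := hM.1
  have hlamord : lam.IsOrdinal := hreg.1
  set JL := jImage j lam with hJL
  set δ : ZFSet.{u} := ⋃₀ JL with hδ
  have hmemJL : ∀ z : ZFSet.{u}, z ∈ JL ↔ ∃ α ∈ lam, jv0 j α = z := fun z =>
    @ZFSet.mem_image (jv0 j) (Classical.allZFSetDefinable _) lam z
  have hjlam_ord : (jv0 j lam).IsOrdinal := jord j hMt hlamord
  have hJLsub : ∀ z ∈ JL, z ∈ jv0 j lam := by
    intro z hz
    rcases (hmemJL z).1 hz with ⟨α, hα, rfl⟩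
    exact (jmem j).1 hα
  have hδsub : ∀ z ∈ δ, z ∈ jv0 j lam := by
    intro z hz
    rcases ZFSet.mem_sUnion.1 hz with ⟨x, hx, hzx⟩
    exact hjlam_ord.mem_trans hzx (hJLsub x hx)
  have hδord : ∀ z ∈ δ, ZFSet.IsOrdinal z := fun z hz =>
    isOrdinal_of_mem hjlam_ord (hδsub z hz)
  have hδM_elts : ∀ z ∈ δ, z ∈ M := by
    intro z hz
    rcases ZFSet.mem_sUnion.1 hz with ⟨x, hx, hzx⟩
    exact hMt _ (hMt _ hjl x hx) z hzx
  have hsucc := lam_succ hreg hunc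
  have hjmemδ : ∀ α ∈ lam, jv0 j α ∈ δ := by
    intro α hα
    rcases hsucc α hα with ⟨γ, hγ, hαγ⟩
    exact ZFSet.mem_sUnion.2 ⟨jv0 j γ, (hmemJL _).2 ⟨γ, hγ, rfl⟩, (jmem j).1 hαγ⟩
  -- function facts
  have huniqV : ∀ x y y' : ZFSet.{u}, ZFSet.pair x y ∈ S → ZFSet.pair x y' ∈ S → y = y' :=
    fun x y y' => hS.1.2 x y y'
  have hdomV : ∀ β ∈ lam, ∃ y : ZFSet.{u}, ZFSet.pair β y ∈ S := fun β hβ => (hS.2 β).2 hβ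
  have happ : ∀ β ∈ lam, ZFSet.pair β (zApp S β) ∈ S := by
    intro β hβ
    rcases hdomV β hβ with ⟨y, hy⟩
    rw [zApp_eq (fun a b => huniqV β a b) hy]
    exact hy
  have hdomlam : ∀ x y : ZFSet.{u}, ZFSet.pair x y ∈ S → x ∈ lam ∧ y = zApp S x := by
    intro x y hp
    refine ⟨(hS.2 x).1 ⟨y, hp⟩, (zApp_eq (fun a b => huniqV x a b) hp).symm⟩
  have jSuniq := jS_uniq j hMt huniqV
  have jSapp : ∀ β ∈ lam, zApp (jv0 j S) (jv0 j β) = jv0 j (zApp S β) := by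
    intro β hβ
    have hp : ZFSet.pair (jv0 j β) (jv0 j (zApp S β)) ∈ jv0 j S := by
      have h := (jmem j).1 (happ β hβ)
      rwa [jpair j hMt] at h
    exact zApp_eq (fun a b => jSuniq _ a b) hp
  -- key stationarity claim (⊆ direction)
  have jstat : ∀ β ∈ lam, ∀ C : ZFSet.{u}, zClub C δ →
      ∃ x, x ∈ jv0 j (zApp S β) ∧ x ∈ C := by
    intro β hβ C hclub
    obtain ⟨hCsub, hCclosed, hCunb⟩ := hclub
    have hchoice : ∀ α, α ∈ lam → ∃ p : ZFSet.{u} × ZFSet.{u},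
        p.1 ∈ C ∧ jv0 j α ∈ p.1 ∧ p.1 ∈ jv0 j p.2 ∧ p.2 ∈ lam := by
      intro α hα
      rcases hCunb (jv0 j α) (hjmemδ α hα) with ⟨c, hcC, hjc⟩
      rcases ZFSet.mem_sUnion.1 (hCsub hcC) with ⟨x, hxJL, hcx⟩
      rcases (hmemJL x).1 hxJL with ⟨γ, hγ, rfl⟩
      exact ⟨(c, γ), hcC, hjc, hcx, hγ⟩
    set g : ZFSet.{u} → ZFSet.{u} :=
      fun α => if h : α ∈ lam then (Classical.choose (hchoice α h)).2 else ∅ with hgdef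
    set cw : ZFSet.{u} → ZFSet.{u} :=
      fun α => if h : α ∈ lam then (Classical.choose (hchoice α h)).1 else ∅ with hcwdef
    have hgprop : ∀ α, (h : α ∈ lam) →
        cw α ∈ C ∧ jv0 j α ∈ cw α ∧ cw α ∈ jv0 j (g α) ∧ g α ∈ lam := by
      intro α h
      have h1 : g α = (Classical.choose (hchoice α h)).2 := by rw [hgdef]; simp [dif_pos h]
      have h2 : cw α = (Classical.choose (hchoice α h)).1 := by rw [hcwdef]; simp [dif_pos h]
      rw [h1, h2]
      exact Classical.choose_spec (hchoice α h)
    have hg : ∀ α ∈ lam, g α ∈ lam := fun α h => (hgprop α h).2.2.2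
    -- the club of closure points
    set C' : ZFSet.{u} := ZFSet.sep
      (fun ξ => (∃ w, w ∈ ξ) ∧ (∀ α ∈ ξ, ∃ α' ∈ ξ, α ∈ α') ∧ ∀ α ∈ ξ, g α ∈ ξ) lam with hC'
    have hC'club : zClub C' lam := by
      refine ⟨fun z hz => (ZFSet.mem_sep.1 hz).1, ?_, ?_⟩
      · intro α hα hαne hlim
        refine ZFSet.mem_sep.2 ⟨hα, ?_, ?_, ?_⟩
        · by_contra h
          push_neg at h
          exact hαne ((ZFSet.eq_empty α).2 h)
        · intro β' hβ'
          rcases hlim β' hβ' with ⟨γ, hγC', hγα, hβ'γ⟩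
          exact ⟨γ, hγα, hβ'γ⟩
        · intro β' hβ'
          rcases hlim β' hβ' with ⟨γ, hγC', hγα, hβ'γ⟩
          have hγprop := (ZFSet.mem_sep.1 hγC').2
          exact (isOrdinal_of_mem hlamord hα).mem_trans (hγprop.2.2 β' hβ'γ) hγα
      · intro α₀ hα₀
        rcases closure_lemma hreg hunc g hg α₀ hα₀ with ⟨ξ, hξlam, hα₀ξ, hgξ, hunbξ, hξne⟩
        refine ⟨ξ, ZFSet.mem_sep.2 ⟨hξlam, ⟨α₀, hα₀ξ⟩, hunbξ, hgξ⟩, hα₀ξ⟩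
    obtain ⟨ξ, hξS, hξC'⟩ := hstat β hβ C' hC'club
    obtain ⟨hξlam, hcofξ⟩ := hparts β hβ ξ hξS
    have hξord := isOrdinal_of_mem hlamord hξlam
    have hjξord := jord j hMt hξord
    have hcont := jcont j hMt hξord hcofξ
    obtain ⟨-, ⟨w, hw⟩, hunbself, hgcl⟩ :
        ξ ∈ lam ∧ (∃ w, w ∈ ξ) ∧ (∀ α ∈ ξ, ∃ α' ∈ ξ, α ∈ α') ∧ ∀ α ∈ ξ, g α ∈ ξ := by
      have h := ZFSet.mem_sep.1 hξC'
      exact ⟨h.1, h.2.1, h.2.2.1, h.2.2.2⟩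
    have hjξC : jv0 j ξ ∈ C := by
      apply hCclosed (jv0 j ξ) (hjmemδ ξ hξlam)
      · intro h
        have := (jmem j).1 hw
        rw [h] at this
        exact ZFSet.notMem_empty _ this
      · intro ρ hρ
        rcases hcont ρ hρ with ⟨β', hβ'ξ, hρβ'⟩
        have hβ'lam : β' ∈ lam := hlamord.mem_trans hβ'ξ hξlam
        obtain ⟨hcwC, hjcw, hcwg, hglam⟩ := hgprop β' hβ'lam
        have hgξ' : g β' ∈ ξ := hgcl β' hβ'ξ
        have hcwjξ : cw β' ∈ jv0 j ξ := hjξord.mem_trans hcwg ((jmem j).1 hgξ')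
        have hcword : (cw β').IsOrdinal := hδord _ (hCsub hcwC)
        exact ⟨cw β', hcwC, hcwjξ, hcword.mem_trans hρβ' hjcw⟩
    exact ⟨jv0 j ξ, (jmem j).1 hξS, hjξC⟩
  -- hypotheses for jpieces / jdisj
  have hpiecesV : ∀ p x y t : ZFSet.{u}, p ∈ S → p = ZFSet.pair x y → t ∈ y →
      t ∈ lam ∧ (∃ w, w ∈ t) ∧ ∃ c, OmegaSeq t c := by
    intro p x y t hp hpe hty
    obtain ⟨hxlam, hye⟩ := hdomlam x y (hpe ▸ hp)
    rw [hye] at hty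
    obtain ⟨htlam, hcof⟩ := hparts x hxlam t hty
    obtain ⟨f, hf1, hf2⟩ := hcof
    exact ⟨htlam, ⟨f 0, hf1 0⟩,
      omegaSeq_of_cofOmega (isOrdinal_of_mem hlamord htlam) ⟨f, hf1, hf2⟩⟩
  have hdisjV : ∀ x x' y y' : ZFSet.{u}, ZFSet.pair x y ∈ S → ZFSet.pair x' y' ∈ S →
      x ≠ x' → ∀ t ∈ y, t ∉ y' := by
    intro x x' y y' hp hq hne t ht
    obtain ⟨hxlam, hye⟩ := hdomlam x y hp
    obtain ⟨hx'lam, hy'e⟩ := hdomlam x' y' hq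
    rw [hye] at ht
    rw [hy'e]
    exact hdisj x hxlam x' hx'lam hne t ht
  -- the main extensionality argument
  apply ZFSet.ext
  intro z
  rw [ZFSet.mem_sep]
  constructor
  · intro hz
    rcases (hmemJL z).1 hz with ⟨β, hβ, rfl⟩
    refine ⟨hjmemδ β hβ, ?_⟩
    intro C hCM hclub
    rw [jSapp β hβ]
    exact jstat β hβ C hclub
  · rintro ⟨hzδ, hstatz⟩
    have hδMmem : δ ∈ M := M_sUnion j hMt hjl
    obtain ⟨C₀, hC₀M, hC₀iff⟩ := M_sepLim j hMt hjl hδMmem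
    have hC₀club : zClub C₀ δ := by
      refine ⟨fun η hη => ((hC₀iff η).1 hη).1, ?_, ?_⟩
      · intro α hαδ hαne hlim
        refine (hC₀iff α).2 ⟨hαδ, ?_⟩
        intro ρ hρ
        rcases hlim ρ hρ with ⟨γ, hγC₀, hγα, hργ⟩
        rcases ((hC₀iff γ).1 hγC₀).2 ρ hργ with ⟨x, hxJL, hxγ, hρx⟩
        exact ⟨x, hxJL, (hδord α hαδ).mem_trans hxγ hγα, hρx⟩
      · intro ρ hρδ
        rcases ZFSet.mem_sUnion.1 hρδ with ⟨x₀, hx₀JL, hρx₀⟩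
        rcases (hmemJL x₀).1 hx₀JL with ⟨α₀, hα₀, rfl⟩
        have h0lam : (∅ : ZFSet) ∈ lam := hlamord.mem_trans ZFSet.omega_zero hunc
        set tail : ZFSet.{u} := ZFSet.sep (fun ζ => α₀ ∈ ζ) lam with htail
        have htailclub : zClub tail lam := by
          refine ⟨fun ζ hζ => (ZFSet.mem_sep.1 hζ).1, ?_, ?_⟩
          · intro α hα hαne hlim
            have : ∃ β₁, β₁ ∈ α := by
              by_contra h
              push_neg at h
              exact hαne ((ZFSet.eq_empty α).2 h)
            rcases this with ⟨β₁, hβ₁⟩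
            rcases hlim β₁ hβ₁ with ⟨γ, hγtail, hγα, -⟩
            exact ZFSet.mem_sep.2
              ⟨hα, (isOrdinal_of_mem hlamord hα).mem_trans (ZFSet.mem_sep.1 hγtail).2 hγα⟩
          · intro ζ hζ
            rcases max2 hreg hunc ζ hζ α₀ hα₀ with ⟨γ, hγ, hζγ, hα₀γ⟩
            exact ⟨γ, ZFSet.mem_sep.2 ⟨hγ, hα₀γ⟩, hζγ⟩
        obtain ⟨ξ, hξS, hξtail⟩ := hstat ∅ h0lam tail htailclub
        obtain ⟨hξlam, hcofξ⟩ := hparts ∅ h0lam ξ hξS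
        have hξord := isOrdinal_of_mem hlamord hξlam
        have hα₀ξ : α₀ ∈ ξ := (ZFSet.mem_sep.1 hξtail).2
        have hjξC₀ : jv0 j ξ ∈ C₀ := by
          refine (hC₀iff _).2 ⟨hjmemδ ξ hξlam, ?_⟩
          intro ρ' hρ'
          rcases jcont j hMt hξord hcofξ ρ' hρ' with ⟨β', hβ'ξ, hρ'β'⟩
          exact ⟨jv0 j β', (hmemJL _).2 ⟨β', hlamord.mem_trans hβ'ξ hξlam, rfl⟩,
            (jmem j).1 hβ'ξ, hρ'β'⟩
        exact ⟨jv0 j ξ, hjξC₀, (jord j hMt hξord).mem_trans hρx₀ ((jmem j).1 hα₀ξ)⟩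
    obtain ⟨η, hηz, hηC₀⟩ := hstatz C₀ hC₀M hC₀club
    obtain ⟨hηδ, hηlimpt⟩ := (hC₀iff η).1 hηC₀
    have hzM : z ∈ M := hδM_elts z hzδ
    obtain ⟨y, hyM, hpzy⟩ := jS_total j hMt hdomV z hzM (hδsub z hzδ)
    have happz : zApp (jv0 j S) z = y := zApp_eq (fun a b => jSuniq z a b) hpzy
    rw [happz] at hηz
    obtain ⟨hηjlam, ⟨w, hw⟩, c, hc⟩ := jpieces j hMt hpiecesV z y η hpzy hηz
    have hηord : η.IsOrdinal := isOrdinal_of_mem hjlam_ord hηjlam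
    have hηne : η ≠ ∅ := by
      intro h
      rw [h] at hw
      exact ZFSet.notMem_empty _ hw
    obtain ⟨f, hf1, hf2⟩ := cofOmega_of_omegaSeq hηord hηne hc
    -- build an increasing sequence from JL cofinal in η
    have hηelts_ord : ∀ x ∈ η, ZFSet.IsOrdinal x := fun x hx => isOrdinal_of_mem hηord hx
    set d : ℕ → ZFSet.{u} := fun n => Nat.rec (Classical.choose (hηlimpt (f 0) (hf1 0)))
      (fun n x => if h : (x ∪ f (n + 1)) ∈ η then Classical.choose (hηlimpt _ h) else ∅) n
      with hddef
    have hd0 : d 0 ∈ JL ∧ d 0 ∈ η ∧ f 0 ∈ d 0 := by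
      have h := Classical.choose_spec (hηlimpt (f 0) (hf1 0))
      exact ⟨h.1, h.2.1, h.2.2⟩
    have hdstep : ∀ n, d n ∈ η →
        d (n + 1) ∈ JL ∧ d (n + 1) ∈ η ∧ d n ∈ d (n + 1) ∧ f (n + 1) ∈ d (n + 1) := by
      intro n hdn
      have hu : (d n ∪ f (n + 1)) ∈ η := by
        rcases union2_eq (hηelts_ord _ hdn) (hηelts_ord _ (hf1 (n + 1))) with h | h <;> rw [h]
        exacts [hdn, hf1 (n + 1)]
      have key : d (n + 1) = Classical.choose (hηlimpt _ hu) := by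
        show (if h : (d n ∪ f (n + 1)) ∈ η then Classical.choose (hηlimpt _ h) else ∅) = _
        rw [dif_pos hu]
      have hspec := Classical.choose_spec (hηlimpt _ hu)
      rw [← key] at hspec
      have hdord : (d (n + 1)).IsOrdinal := hηelts_ord _ hspec.2.1
      refine ⟨hspec.1, hspec.2.1, ?_, ?_⟩
      · rcases le_of_subset (hηelts_ord _ hdn)
          (union2_isOrdinal (hηelts_ord _ hdn) (hηelts_ord _ (hf1 (n + 1))))
          subset_union_left' with h | h
        · exact hdord.mem_trans h hspec.2.2
        · rw [h]; exact hspec.2.2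
      · rcases le_of_subset (hηelts_ord _ (hf1 (n + 1)))
          (union2_isOrdinal (hηelts_ord _ hdn) (hηelts_ord _ (hf1 (n + 1))))
          subset_union_right' with h | h
        · exact hdord.mem_trans h hspec.2.2
        · rw [h]; exact hspec.2.2
    have hdmem : ∀ n, d n ∈ JL ∧ d n ∈ η ∧ f n ∈ d n := by
      intro n
      induction n with
      | zero => exact hd0
      | succ n ih =>
        obtain ⟨h1, h2, h3, h4⟩ := hdstep n ih.2.1
        exact ⟨h1, h2, h4⟩
    have hdincr : ∀ n, d n ∈ d (n + 1) := fun n => (hdstep n (hdmem n).2.1).2.2.1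
    set β : ℕ → ZFSet.{u} := fun n => Classical.choose ((hmemJL (d n)).1 (hdmem n).1) with hβdef
    have hβspec : ∀ n, β n ∈ lam ∧ jv0 j (β n) = d n := by
      intro n
      have h := Classical.choose_spec ((hmemJL (d n)).1 (hdmem n).1)
      exact ⟨h.1, h.2⟩
    have hβincr : ∀ n, β n ∈ β (n + 1) := by
      intro n
      apply (jmem j).2
      rw [(hβspec n).2, (hβspec (n + 1)).2]
      exact hdincr n
    set ξ : ZFSet.{u} := ⋃₀ ZFSet.range β with hξdef
    have hξlam : ξ ∈ lam := sup_range_mem_lam hreg hunc β (fun n => (hβspec n).1)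
    have hξord := isOrdinal_of_mem hlamord hξlam
    have hβξ : ∀ n, β n ∈ ξ := fun n => mem_sup_range.2 ⟨n + 1, hβincr n⟩
    have hcofξ : zCofOmega ξ := ⟨β, hβξ, fun α hα => mem_sup_range.1 hα⟩
    have hηeq : η = jv0 j ξ := by
      apply ZFSet.ext
      intro ρ
      constructor
      · intro hρ
        rcases hf2 ρ hρ with ⟨n, hρn⟩
        have hρd : ρ ∈ d n := (hηelts_ord _ (hdmem n).2.1).mem_trans hρn (hdmem n).2.2
        rw [← (hβspec n).2] at hρd
        exact (jord j hMt hξord).mem_trans hρd ((jmem j).1 (hβξ n))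
      · intro hρ
        rcases jcont j hMt hξord hcofξ ρ hρ with ⟨β', hβ'ξ, hρβ'⟩
        rcases mem_sup_range.1 hβ'ξ with ⟨n, hβ'n⟩
        have h1 : jv0 j β' ∈ d n := by
          rw [← (hβspec n).2]
          exact (jmem j).1 hβ'n
        have h2 : jv0 j β' ∈ η := hηord.mem_trans h1 (hdmem n).2.1
        exact hηord.mem_trans hρβ' h2
    obtain ⟨γ, hγlam, hξγ⟩ := hcover ξ hξlam hcofξ
    have hqmem : ZFSet.pair (jv0 j γ) (jv0 j (zApp S γ)) ∈ jv0 j S := by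
      have h := (jmem j).1 (happ γ hγlam)
      rwa [jpair j hMt] at h
    have hηin : η ∈ jv0 j (zApp S γ) := by
      rw [hηeq]
      exact (jmem j).1 hξγ
    have hzγ : z = jv0 j γ := by
      by_contra hne'
      exact jdisj j hMt hdisjV z (jv0 j γ) y (jv0 j (zApp S γ)) hpzy hqmem hne' η hηz hηin
    exact (hmemJL z).2 ⟨γ, hγlam, hzγ.symm⟩

end SolovayPf
end SolovayInfra

/-- Solovay's Lemma: if `λ` is regular uncountable, `⟨S_α : α < λ⟩` is a partition of
`{ξ < λ : cf(ξ) = ω}` into stationary sets, and `j : V → M` is elementary with `j[λ] ∈ M`,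
then `j[λ] = {α < sup j[λ] : (j(⟨S_α⟩))_α is stationary in sup j[λ] in M}`. -/
theorem solovay_lemma (lam : ZFSet) (hreg : zRegular lam) (hunc : ZFSet.omega ∈ lam)
    (S : ZFSet) (hS : zFnOn S lam)
    (hparts : ∀ α ∈ lam, ∀ ξ ∈ zApp S α, ξ ∈ lam ∧ zCofOmega ξ)
    (hdisj : ∀ α ∈ lam, ∀ β ∈ lam, α ≠ β → ∀ ξ : ZFSet, ξ ∈ zApp S α → ξ ∉ zApp S β)
    (hcover : ∀ ξ ∈ lam, zCofOmega ξ → ∃ α ∈ lam, ξ ∈ zApp S α)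
    (hstat : ∀ α ∈ lam, zStationary (zApp S α) lam)
    (M : Set ZFSet) (hM : IsInnerModel M) (j : Emb Vclass M)
    (hjl : jImage j lam ∈ M) :
    jImage j lam =
      ZFSet.sep
        (fun α => zStationaryIn M (zApp (jv0 j S) α) (ZFSet.sUnion (jImage j lam)))
        (ZFSet.sUnion (jImage j lam)) := SolovayPf.solovay_main lam hreg hunc S hS hparts hdisj hcover hstat M hM j hjl
end
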